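/- arXiv:1409.8038 — 5 statements merged into one kernel-verified Lean document; each statement's English description precedes it below -/
import Mathlib

section
/- Let x ∈ H¹_loc(ℝ) and let a : ℝ → ℝ be measurable with a(t) ≥ l₀ > 0 for all t. Let Ṽ : ℝ → ℝ be continuous with Ṽ ≥ 0, Ṽ(x) = 0 iff x ∈ {−1, 1}, Ṽ → +∞ at ±∞, and Ṽ bounded below by a positive constant on every set of the form {y : |y+1| ≥ η/2 and |y−1| ≥ η/2}. If J(x) = ∫_ℝ (½|ẋ(t)|² + a(t)Ṽ(x(t))) dt < ∞, then x(t) converges to −1 or to 1 as t → +∞, and x(t) converges to −1 or to 1 as t → −∞. -/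
open Set MeasureTheory Filter Topology

/-- Tail of a nonnegative integrable function can be made small. -/
lemma tail_small (f : ℝ → ℝ) (hf : Integrable f) (hf0 : ∀ t, 0 ≤ f t)
    {ε : ℝ} (hε : 0 < ε) : ∃ T : ℝ, ∫ t in Set.Ioi T, f t < ε := by
  have h := MeasureTheory.intervalIntegral_tendsto_integral_Ioi (0 : ℝ)
    hf.integrableOn (tendsto_id (α := ℝ) (x := atTop))
  have h2 : Tendsto (fun b : ℝ => (∫ t in Set.Ioi (0:ℝ), f t) - ∫ t in (0:ℝ)..b, f t)
      atTop (nhds 0) := by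
    simpa using (tendsto_const_nhds (x := ∫ t in Set.Ioi (0:ℝ), f t) (f := atTop)).sub h
  have h3 : ∀ᶠ b : ℝ in atTop,
      (∫ t in Set.Ioi (0:ℝ), f t) - (∫ t in (0:ℝ)..b, f t) < ε :=
    h2.eventually_lt_const hε
  obtain ⟨T, hTε, hT0⟩ := (h3.and (eventually_ge_atTop (0:ℝ))).exists
  refine ⟨T, ?_⟩
  have hdisj : Disjoint (Set.Ioc (0:ℝ) T) (Set.Ioi T) := by
    rw [Set.disjoint_left]
    rintro r ⟨_, hr⟩ hr'
    exact absurd hr' (not_lt.2 hr)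
  have hsplit : (∫ t in Set.Ioc (0:ℝ) T, f t) + ∫ t in Set.Ioi T, f t
      = ∫ t in Set.Ioi (0:ℝ), f t := by
    rw [← MeasureTheory.setIntegral_union hdisj measurableSet_Ioi hf.integrableOn
      hf.integrableOn, Set.Ioc_union_Ioi_eq_Ioi hT0]
  rw [intervalIntegral.integral_of_le hT0] at hTε
  linarith

/-- Energy lower bound on a crossing interval. -/
lemma crossing_bound {x x' f : ℝ → ℝ} {u v c : ℝ} (huv : u ≤ v) (hc : 0 ≤ c)
    (hx' : IntegrableOn x' (Set.Ioc u v)) (hf : IntegrableOn f (Set.Ioc u v))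
    (hAC : x v - x u = ∫ r in u..v, x' r)
    (hle : ∀ r ∈ Set.Ioo u v, c * |x' r| ≤ f r) :
    c * |x v - x u| ≤ ∫ t in Set.Ioc u v, f t := by
  have h1 : |x v - x u| ≤ ∫ r in u..v, |x' r| := by
    rw [hAC]
    exact intervalIntegral.abs_integral_le_integral_abs huv
  have h2 : (∫ r in u..v, |x' r|) = ∫ r in Set.Ioo u v, |x' r| := by
    rw [intervalIntegral.integral_of_le huv, MeasureTheory.integral_Ioc_eq_integral_Ioo]
  have hx'Ioo : IntegrableOn (fun r => c * |x' r|) (Set.Ioo u v) :=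
    ((hx'.mono_set Set.Ioo_subset_Ioc_self).abs).const_mul c
  have h3 : (∫ r in Set.Ioo u v, c * |x' r|) ≤ ∫ t in Set.Ioo u v, f t :=
    MeasureTheory.setIntegral_mono_on hx'Ioo (hf.mono_set Set.Ioo_subset_Ioc_self)
      measurableSet_Ioo hle
  have h4 : (∫ r in Set.Ioo u v, c * |x' r|) = c * ∫ r in Set.Ioo u v, |x' r| :=
    MeasureTheory.integral_const_mul c _
  have h5 : c * |x v - x u| ≤ c * ∫ r in Set.Ioo u v, |x' r| := by
    apply mul_le_mul_of_nonneg_left _ hc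
    rw [← h2]; exact h1
  rw [MeasureTheory.integral_Ioc_eq_integral_Ioo]
  calc c * |x v - x u| ≤ c * ∫ r in Set.Ioo u v, |x' r| := h5
    _ = ∫ r in Set.Ioo u v, c * |x' r| := h4.symm
    _ ≤ ∫ t in Set.Ioo u v, f t := h3

/-- For each small η, the trajectory eventually stays within η of one of the wells. -/
lemma key_eta (x x' a Vt : ℝ → ℝ) (l₀ : ℝ) (hl₀ : 0 < l₀)
    (ha : ∀ t, l₀ ≤ a t)
    (hx'loc : MeasureTheory.LocallyIntegrable x')
    (hAC : ∀ s t : ℝ, x t - x s = ∫ r in s..t, x' r)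
    (hxcont : Continuous x)
    (hVnonneg : ∀ y, 0 ≤ Vt y)
    (hVpos : ∀ η > 0, ∃ d > 0, ∀ y : ℝ, η / 2 ≤ |y + 1| → η / 2 ≤ |y - 1| → d ≤ Vt y)
    (hJ : MeasureTheory.Integrable (fun t => (1 / 2) * (x' t) ^ 2 + a t * Vt (x t)))
    {η : ℝ} (hη0 : 0 < η) (hη1 : η ≤ 1) :
    ∃ σ : ℝ, (σ = -1 ∨ σ = 1) ∧ ∃ T : ℝ, ∀ t ≥ T, |x t - σ| < η := by
  set f : ℝ → ℝ := fun t => (1 / 2) * (x' t) ^ 2 + a t * Vt (x t) with hf_def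
  have hf0 : ∀ t, 0 ≤ f t := by
    intro t
    have h1 : 0 ≤ (1 / 2 : ℝ) * (x' t) ^ 2 := by positivity
    have h2 : 0 ≤ a t * Vt (x t) :=
      mul_nonneg (le_trans hl₀.le (ha t)) (hVnonneg _)
    simpa [hf_def] using add_nonneg h1 h2
  obtain ⟨d, hd0, hd⟩ := hVpos η hη0
  set c : ℝ := Real.sqrt (2 * l₀ * d) with hc_def
  have hc2 : c ^ 2 = 2 * l₀ * d := Real.sq_sqrt (by positivity)
  have hc0 : 0 < c := Real.sqrt_pos.2 (by positivity)
  have hε : 0 < c * (η / 2) := by positivity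
  obtain ⟨T, hT⟩ := tail_small f hJ hf0 hε
  -- find a time T' ≥ T where x is close to one of the wells
  have hex : ∃ T' ≥ T, |x T' + 1| < η / 2 ∨ |x T' - 1| < η / 2 := by
    by_contra hcon
    push_neg at hcon
    have hbig : ∀ t ∈ Set.Ioi T, ‖(l₀ * d : ℝ)‖ ≤ ‖f t‖ := by
      intro t ht
      obtain ⟨h1, h2⟩ := hcon t (le_of_lt ht)
      have hV : d ≤ Vt (x t) := hd (x t) h1 h2
      have : l₀ * d ≤ f t := by
        have h3 : l₀ * d ≤ a t * Vt (x t) :=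
          mul_le_mul (ha t) hV hd0.le (le_trans hl₀.le (ha t))
        have h4 : 0 ≤ (1 / 2 : ℝ) * (x' t) ^ 2 := by positivity
        simp only [hf_def]; linarith
      rw [Real.norm_eq_abs, Real.norm_eq_abs, abs_of_nonneg (by positivity),
        abs_of_nonneg (hf0 t)]
      exact this
    have hint : IntegrableOn (fun _ : ℝ => l₀ * d) (Set.Ioi T) := by
      refine MeasureTheory.Integrable.mono hJ.integrableOn aestronglyMeasurable_const ?_
      rw [MeasureTheory.ae_restrict_iff' measurableSet_Ioi]
      exact Filter.Eventually.of_forall hbig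
    rcases (MeasureTheory.integrableOn_const_iff (C := l₀ * d)).mp hint with h | h
    · exact absurd (enorm_eq_zero.mp h) (by positivity)
    · rw [Real.volume_Ioi] at h; exact absurd h (by simp)
  obtain ⟨T', hT'T, hT'⟩ := hex
  have hσex : ∃ σ : ℝ, (σ = -1 ∨ σ = 1) ∧ |x T' - σ| < η / 2 := by
    rcases hT' with h | h
    · exact ⟨-1, Or.inl rfl, by simpa [sub_neg_eq_add] using h⟩
    · exact ⟨1, Or.inr rfl, h⟩
  obtain ⟨σ, hσ, hxT'⟩ := hσex
  have hσabs : |σ| = 1 := by rcases hσ with rfl | rfl <;> simp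
  refine ⟨σ, hσ, T', ?_⟩
  intro t ht
  by_contra hbad
  push_neg at hbad
  -- hbad : η ≤ |x t - σ|
  -- first crossing time v
  set Sv : Set ℝ := Set.Icc T' t ∩ {s | η ≤ |x s - σ|} with hSv_def
  have hSv_closed : IsClosed Sv :=
    isClosed_Icc.inter (isClosed_le continuous_const ((hxcont.sub continuous_const).abs))
  have hSv_ne : Sv.Nonempty := ⟨t, ⟨ht, le_rfl⟩, hbad⟩
  have hSv_bdd : BddBelow Sv := ⟨T', fun s hs => hs.1.1⟩
  set v : ℝ := sInf Sv with hv_def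
  have hv_mem : v ∈ Sv := hSv_closed.csInf_mem hSv_ne hSv_bdd
  have hvT' : T' ≤ v := hv_mem.1.1
  have hvt : v ≤ t := hv_mem.1.2
  have hxv : η ≤ |x v - σ| := hv_mem.2
  -- last departure time u
  set Su : Set ℝ := Set.Icc T' v ∩ {s | |x s - σ| ≤ η / 2} with hSu_def
  have hSu_closed : IsClosed Su :=
    isClosed_Icc.inter (isClosed_le ((hxcont.sub continuous_const).abs) continuous_const)
  have hSu_ne : Su.Nonempty := ⟨T', ⟨le_rfl, hvT'⟩, hxT'.le⟩
  have hSu_bdd : BddAbove Su := ⟨v, fun s hs => hs.1.2⟩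
  set u : ℝ := sSup Su with hu_def
  have hu_mem : u ∈ Su := hSu_closed.csSup_mem hSu_ne hSu_bdd
  have huT' : T' ≤ u := hu_mem.1.1
  have huv : u ≤ v := hu_mem.1.2
  have hxu : |x u - σ| ≤ η / 2 := hu_mem.2
  have huv_lt : u < v := by
    rcases lt_or_eq_of_le huv with h | h
    · exact h
    · exfalso; rw [h] at hxu; linarith
  -- on (u,v), the trajectory is in the bad region
  have hVd : ∀ r ∈ Set.Ioo u v, d ≤ Vt (x r) := by
    rintro r ⟨hru, hrv⟩
    have h1 : η / 2 < |x r - σ| := by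
      by_contra h
      push_neg at h
      have hrSu : r ∈ Su := ⟨⟨le_trans huT' hru.le, hrv.le⟩, h⟩
      exact absurd (le_csSup hSu_bdd hrSu) (not_le.2 hru)
    have h2 : |x r - σ| < η := by
      by_contra h
      push_neg at h
      have hrSv : r ∈ Sv := ⟨⟨le_trans huT' hru.le, le_trans hrv.le hvt⟩, h⟩
      exact absurd (csInf_le hSv_bdd hrSv) (not_le.2 hrv)
    have h3 : 2 - η ≤ |x r + σ| := by
      have habs : |(2:ℝ) * σ| ≤ |x r + σ| + |x r - σ| := by
        have h := abs_add_le (x r + σ) (σ - x r)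
        rw [abs_sub_comm σ (x r)] at h
        rw [show (2:ℝ) * σ = x r + σ + (σ - x r) by ring]
        exact h
      have h2σ : |(2:ℝ) * σ| = 2 := by rw [abs_mul, hσabs]; norm_num
      rw [h2σ] at habs
      linarith
    rcases hσ with rfl | rfl
    · refine hd (x r) ?_ ?_
      · simpa [sub_neg_eq_add] using h1.le
      · calc η / 2 ≤ 2 - η := by linarith
          _ ≤ |x r + -1| := h3
          _ = |x r - 1| := by rw [show x r + -1 = x r - 1 by ring]
    · refine hd (x r) ?_ ?_
      · calc η / 2 ≤ 2 - η := by linarith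
          _ ≤ |x r + 1| := h3
      · exact h1.le
  -- apply the crossing bound
  have hle : ∀ r ∈ Set.Ioo u v, c * |x' r| ≤ f r := by
    intro r hr
    have hV : d ≤ Vt (x r) := hVd r hr
    have h3 : l₀ * d ≤ a r * Vt (x r) :=
      mul_le_mul (ha r) hV hd0.le (le_trans hl₀.le (ha r))
    have hsq : 0 ≤ (|x' r| - c) ^ 2 := sq_nonneg _
    have habs : |x' r| ^ 2 = (x' r) ^ 2 := sq_abs _
    simp only [hf_def]
    nlinarith [abs_nonneg (x' r)]
  have hx'int : IntegrableOn x' (Set.Ioc u v) :=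
    (hx'loc.integrableOn_isCompact isCompact_Icc).mono_set Set.Ioc_subset_Icc_self
  have hcb := crossing_bound huv hc0.le hx'int hJ.integrableOn (hAC u v) hle
  have htail : (∫ r in Set.Ioc u v, f r) ≤ ∫ r in Set.Ioi T, f r := by
    refine MeasureTheory.setIntegral_mono_set hJ.integrableOn ?_ ?_
    · exact Filter.Eventually.of_forall hf0
    · refine HasSubset.Subset.eventuallyLE (fun r hr => ?_)
      exact lt_of_le_of_lt (le_trans hT'T huT') hr.1
  have hlow : η / 2 ≤ |x v - x u| := by
    have h := abs_sub_abs_le_abs_sub (x v - σ) (x u - σ)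
    rw [show x v - σ - (x u - σ) = x v - x u by ring] at h
    linarith
  have hfinal : c * (η / 2) ≤ ∫ r in Set.Ioc u v, f r :=
    le_trans (mul_le_mul_of_nonneg_left hlow hc0.le) hcb
  linarith

lemma key_atTop (x x' a Vt : ℝ → ℝ) (l₀ : ℝ) (hl₀ : 0 < l₀)
    (ha : ∀ t, l₀ ≤ a t)
    (hx'loc : MeasureTheory.LocallyIntegrable x')
    (hAC : ∀ s t : ℝ, x t - x s = ∫ r in s..t, x' r)
    (hVnonneg : ∀ y, 0 ≤ Vt y)
    (hVpos : ∀ η > 0, ∃ d > 0, ∀ y : ℝ, η / 2 ≤ |y + 1| → η / 2 ≤ |y - 1| → d ≤ Vt y)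
    (hJ : MeasureTheory.Integrable (fun t => (1 / 2) * (x' t) ^ 2 + a t * Vt (x t))) :
    Filter.Tendsto x Filter.atTop (nhds (-1)) ∨ Filter.Tendsto x Filter.atTop (nhds 1) := by
  have hxcont : Continuous x := by
    have hii : ∀ p q : ℝ, IntervalIntegrable x' volume p q := fun p q =>
      (hx'loc.integrableOn_isCompact isCompact_uIcc).intervalIntegrable
    have hprim : Continuous fun t => ∫ r in (0:ℝ)..t, x' r :=
      intervalIntegral.continuous_primitive hii 0
    have hxe : ∀ t, x t = x 0 + ∫ r in (0:ℝ)..t, x' r := fun t => by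
      have := hAC 0 t; linarith
    rw [show x = fun t => x 0 + ∫ r in (0:ℝ)..t, x' r from funext hxe]
    exact continuous_const.add hprim
  obtain ⟨σ₀, hσ₀, T₀, hT₀⟩ := key_eta x x' a Vt l₀ hl₀ ha hx'loc hAC hxcont hVnonneg
    hVpos hJ one_pos le_rfl
  have htend : Tendsto x atTop (nhds σ₀) := by
    rw [Metric.tendsto_atTop]
    intro ε hε
    have hη0 : 0 < min ε 1 := lt_min hε one_pos
    have hη1 : min ε 1 ≤ 1 := min_le_right _ _
    obtain ⟨σ, hσ, T, hT⟩ := key_eta x x' a Vt l₀ hl₀ ha hx'loc hAC hxcont hVnonneg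
      hVpos hJ hη0 hη1
    have hσσ₀ : σ = σ₀ := by
      by_contra hne
      have h1 := hT (max T T₀) (le_max_left _ _)
      have h2 := hT₀ (max T T₀) (le_max_right _ _)
      have h3 : |σ - σ₀| = 2 := by
        rcases hσ with rfl | rfl <;> rcases hσ₀ with rfl | rfl
        · exact absurd rfl hne
        · norm_num
        · norm_num
        · exact absurd rfl hne
      have h4 : |σ - σ₀| ≤ |x (max T T₀) - σ₀| + |x (max T T₀) - σ| := by
        have h := abs_sub (x (max T T₀) - σ₀) (x (max T T₀) - σ)
        rw [show x (max T T₀) - σ₀ - (x (max T T₀) - σ) = σ - σ₀ by ring] at h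
        exact h
      have h5 : min ε 1 ≤ 1 := hη1
      linarith
    refine ⟨T, fun t htt => ?_⟩
    rw [Real.dist_eq, ← hσσ₀]
    exact lt_of_lt_of_le (hT t htt) (min_le_left _ _)
  rcases hσ₀ with rfl | rfl
  · exact Or.inl htend
  · exact Or.inr htend

theorem stmt2 (x x' a Vt : ℝ → ℝ) (l₀ : ℝ) (hl₀ : 0 < l₀)
    (ha_meas : Measurable a) (ha : ∀ t, l₀ ≤ a t)
    (hx'loc : MeasureTheory.LocallyIntegrable x')
    (hAC : ∀ s t : ℝ, x t - x s = ∫ r in s..t, x' r)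
    (hVcont : Continuous Vt) (hVnonneg : ∀ y, 0 ≤ Vt y)
    (hVzero : ∀ y, Vt y = 0 ↔ (y = -1 ∨ y = 1))
    (hVtop : Filter.Tendsto Vt Filter.atTop Filter.atTop)
    (hVbot : Filter.Tendsto Vt Filter.atBot Filter.atTop)
    (hVpos : ∀ η > 0, ∃ d > 0, ∀ y : ℝ, η / 2 ≤ |y + 1| → η / 2 ≤ |y - 1| → d ≤ Vt y)
    (hJ : MeasureTheory.Integrable (fun t => (1 / 2) * (x' t) ^ 2 + a t * Vt (x t))) :
    (Filter.Tendsto x Filter.atTop (nhds (-1)) ∨ Filter.Tendsto x Filter.atTop (nhds 1)) ∧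
    (Filter.Tendsto x Filter.atBot (nhds (-1)) ∨ Filter.Tendsto x Filter.atBot (nhds 1)) := by
  constructor
  · exact key_atTop x x' a Vt l₀ hl₀ ha hx'loc hAC hVnonneg hVpos hJ
  · -- reflect time
    have hx'loc_y : MeasureTheory.LocallyIntegrable (fun t => -x' (-t)) := by
      rw [MeasureTheory.locallyIntegrable_iff]
      intro K hK
      have h1 : IntegrableOn x' (-K) := hx'loc.integrableOn_isCompact hK.neg
      have h2 : IntegrableOn (x' ∘ Neg.neg) (Neg.neg ⁻¹' (-K)) :=
        ((Measure.measurePreserving_neg (volume : Measure ℝ)).integrableOn_comp_preimage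
          (Homeomorph.neg ℝ).measurableEmbedding).2 h1
      have h3 : Neg.neg ⁻¹' (-K : Set ℝ) = K := by
        ext r; simp [Set.mem_neg]
      rw [h3] at h2
      exact (h2.neg : IntegrableOn (fun t => -(x' (-t))) K volume)
    have hAC_y : ∀ s t : ℝ, x (-t) - x (-s) = ∫ r in s..t, -x' (-r) := by
      intro s t
      have h1 : x (-t) - x (-s) = ∫ r in (-s)..(-t), x' r := hAC (-s) (-t)
      have h2 : (∫ r in s..t, -x' (-r)) = -∫ r in s..t, x' (-r) := by
        simpa using intervalIntegral.integral_neg (f := fun r => x' (-r))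
      have h3 : (∫ r in s..t, x' (-r)) = ∫ r in (-t)..(-s), x' r :=
        intervalIntegral.integral_comp_neg x'
      have h4 : (∫ r in (-t)..(-s), x' r) = -∫ r in (-s)..(-t), x' r :=
        intervalIntegral.integral_symm _ _
      rw [h1, h2, h3, h4, neg_neg]
    have hJ_y : MeasureTheory.Integrable
        (fun t => (1 / 2) * (-x' (-t)) ^ 2 + a (-t) * Vt (x (-t))) := by
      have h := hJ.comp_neg
      simpa [neg_sq] using h
    have h := key_atTop (fun t => x (-t)) (fun t => -x' (-t)) (fun t => a (-t)) Vt l₀ hl₀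
      (fun t => ha (-t)) hx'loc_y hAC_y hVnonneg hVpos hJ_y
    have hconv : ∀ σ : ℝ, Tendsto (fun t => x (-t)) atTop (nhds σ) →
        Tendsto x atBot (nhds σ) := by
      intro σ hσ
      have := hσ.comp tendsto_neg_atBot_atTop
      simpa only [Function.comp_def, neg_neg] using this
    rcases h with h | h
    · exact Or.inl (hconv _ h)
    · exact Or.inr (hconv _ h)
end

section
/- Let A, T > 0, let a : ℝ → ℝ satisfy a(t) ≥ l₀ > 0, and let Ṽ : ℝ → ℝ be continuous, nonnegative, and coercive (Ṽ(y) → +∞ as |y| → +∞). Then there exists B > 0 (depending only on A, T, l₀, Ṽ) such that every x ∈ H¹_loc(ℝ) with ∫_ℝ (½|ẋ|² + a(t)Ṽ(x(t))) dt ≤ A satisfies ‖x‖_{H¹([−T,T])} ≤ B. -/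
open Set MeasureTheory Filter Topology
open scoped Interval

theorem stmt4 (a Vt : ℝ → ℝ) (A T l₀ : ℝ)
    (hA : 0 < A) (hT : 0 < T) (hl₀ : 0 < l₀) (ha : ∀ t, l₀ ≤ a t)
    (hVcont : Continuous Vt) (hVnonneg : ∀ y, 0 ≤ Vt y)
    (hVcoer : Filter.Tendsto Vt Filter.atTop Filter.atTop)
    (hVcoer' : Filter.Tendsto Vt Filter.atBot Filter.atTop) :
    ∃ B > (0 : ℝ), ∀ x x' : ℝ → ℝ,
      MeasureTheory.LocallyIntegrable x' →
      (∀ s t : ℝ, x t - x s = ∫ r in s..t, x' r) →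
      MeasureTheory.Integrable (fun t => (1 / 2) * (x' t) ^ 2 + a t * Vt (x t)) →
      (∫ t, ((1 / 2) * (x' t) ^ 2 + a t * Vt (x t))) ≤ A →
      Real.sqrt ((∫ t in Set.Icc (-T) T, (x t) ^ 2) +
        ∫ t in Set.Icc (-T) T, (x' t) ^ 2) ≤ B := by
  set K : ℝ := A / (T * l₀) with hKdef
  have hK : 0 < K := by positivity
  obtain ⟨M₁, hM₁⟩ := (hVcoer.eventually (eventually_ge_atTop K)).exists_forall_of_atTop
  obtain ⟨M₂, hM₂⟩ := (hVcoer'.eventually (eventually_ge_atTop K)).exists_forall_of_atBot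
  set C : ℝ := max |M₁| |M₂| + T + A with hCdef
  have hC : 0 ≤ C := by
    have : (0:ℝ) ≤ max |M₁| |M₂| := le_trans (abs_nonneg M₁) (le_max_left _ _)
    linarith
  refine ⟨Real.sqrt (2 * T * C ^ 2 + 2 * A), Real.sqrt_pos.mpr (by positivity), ?_⟩
  intro x x' hx' hx hint hIA
  set f : ℝ → ℝ := fun t => (1 / 2) * (x' t) ^ 2 + a t * Vt (x t) with hfdef
  have hfnn : ∀ t, 0 ≤ f t := by
    intro t
    have h1 : 0 ≤ a t * Vt (x t) :=
      mul_nonneg (le_trans hl₀.le (ha t)) (hVnonneg (x t))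
    have h2 : 0 ≤ (x' t) ^ 2 := sq_nonneg _
    simp only [hfdef]; nlinarith
  have hIcc : MeasurableSet (Icc (-T) T) := measurableSet_Icc
  have hvolIcc : (volume (Icc (-T) T)).toReal = 2 * T := by
    rw [Real.volume_Icc, ENNReal.toReal_ofReal (by linarith)]
    ring
  have hvolIccne : volume (Icc (-T) T) ≠ ⊤ := by
    rw [Real.volume_Icc]; exact ENNReal.ofReal_ne_top
  -- integrability of x'^2
  have hx'm : AEStronglyMeasurable (fun t => (x' t) ^ 2) volume := by
    exact (continuous_pow 2).comp_aestronglyMeasurable hx'.aestronglyMeasurable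
  have hx2int : Integrable (fun t => (x' t) ^ 2) := by
    refine (hint.const_mul 2).mono' hx'm (Filter.Eventually.of_forall fun t => ?_)
    have h1 : 0 ≤ a t * Vt (x t) :=
      mul_nonneg (le_trans hl₀.le (ha t)) (hVnonneg (x t))
    rw [Real.norm_eq_abs, abs_of_nonneg (sq_nonneg _)]
    simp only [hfdef]; nlinarith
  have hIx2 : (∫ t, (x' t) ^ 2) ≤ 2 * A := by
    have h1 : (∫ t, (x' t) ^ 2) ≤ ∫ t, 2 * f t := by
      refine integral_mono hx2int (hint.const_mul 2) fun t => ?_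
      have h1 : 0 ≤ a t * Vt (x t) :=
        mul_nonneg (le_trans hl₀.le (ha t)) (hVnonneg (x t))
      simp only [hfdef]; nlinarith
    rw [integral_const_mul] at h1
    linarith
  have hIx2Icc : (∫ t in Icc (-T) T, (x' t) ^ 2) ≤ 2 * A :=
    le_trans (setIntegral_le_integral hx2int
      (Filter.Eventually.of_forall fun t => sq_nonneg _)) hIx2
  -- continuity of x
  have hxc : Continuous x := by
    have hprim : Continuous fun t => x 0 + ∫ r in (0:ℝ)..t, x' r :=
      continuous_const.add (intervalIntegral.continuous_primitive
        (fun s t => (hx'.integrableOn_isCompact isCompact_uIcc).intervalIntegrable) 0)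
    convert hprim using 1
    funext t
    have := hx 0 t
    linarith
  -- the a.e. defined L¹ bound for |x'| over Icc
  have hx'Icc : IntegrableOn x' (Icc (-T) T) volume :=
    hx'.integrableOn_isCompact isCompact_Icc
  have hx2Icc : IntegrableOn (fun t => (x' t) ^ 2) (Icc (-T) T) volume :=
    hx2int.integrableOn
  have habsint : IntegrableOn (fun t => |x' t|) (Icc (-T) T) volume := hx'Icc.abs
  have hconstIcc : ∀ c : ℝ, IntegrableOn (fun _ => c) (Icc (-T) T) volume := fun c =>
    integrableOn_const hvolIccne
  have hIabs : (∫ t in Icc (-T) T, |x' t|) ≤ T + A := by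
    have h1 : (∫ t in Icc (-T) T, |x' t|) ≤
        ∫ t in Icc (-T) T, ((1:ℝ)/2 + (x' t) ^ 2 / 2) := by
      refine setIntegral_mono_on habsint
        ((hconstIcc (1/2)).add (hx2Icc.div_const 2)) hIcc ?_
      intro t _
      nlinarith [sq_nonneg (|x' t| - 1), sq_abs (x' t)]
    have h2 : (∫ t in Icc (-T) T, ((1:ℝ)/2 + (x' t) ^ 2 / 2)) =
        (volume (Icc (-T) T)).toReal * (1/2) + (∫ t in Icc (-T) T, (x' t) ^ 2) / 2 := by
      rw [integral_add (hconstIcc (1/2)) (hx2Icc.div_const 2),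
        setIntegral_const, integral_div, smul_eq_mul]
      rfl
    rw [h2, hvolIcc] at h1
    linarith
  -- find a point t* with |x t*| small
  have hexists : ∃ t₀ ∈ Icc (-T) T, Vt (x t₀) < K := by
    by_contra hcon
    push_neg at hcon
    have hlow : l₀ * K * (volume (Icc (-T) T)).toReal ≤ ∫ t in Icc (-T) T, f t := by
      refine setIntegral_ge_of_const_le_real hIcc hvolIccne (fun t ht => ?_) hint.integrableOn
      have h1 := hcon t ht
      have h2 : l₀ * K ≤ a t * Vt (x t) :=
        mul_le_mul (ha t) h1 hK.le (le_trans hl₀.le (ha t))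
      simp only [hfdef]; nlinarith [sq_nonneg (x' t)]
    have hup : (∫ t in Icc (-T) T, f t) ≤ A :=
      le_trans (setIntegral_le_integral hint
        (Filter.Eventually.of_forall hfnn)) hIA
    rw [hvolIcc] at hlow
    have : l₀ * K * (2 * T) = 2 * A := by
      field_simp [hKdef]
      rw [hKdef]; field_simp
    nlinarith
  obtain ⟨t₀, ht₀mem, ht₀⟩ := hexists
  have hxt₀ : |x t₀| ≤ max |M₁| |M₂| := by
    have h1 : x t₀ < M₁ := by
      by_contra h
      push_neg at h
      exact absurd (hM₁ _ h) (not_le_of_gt ht₀)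
    have h2 : M₂ < x t₀ := by
      by_contra h
      push_neg at h
      exact absurd (hM₂ _ h) (not_le_of_gt ht₀)
    rcases abs_cases (x t₀) with ⟨he, _⟩ | ⟨he, _⟩
    · calc |x t₀| = x t₀ := he
        _ ≤ |M₁| := le_trans h1.le (le_abs_self M₁)
        _ ≤ _ := le_max_left _ _
    · calc |x t₀| = -(x t₀) := he
        _ ≤ |M₂| := by cases abs_cases M₂ with
          | inl h => linarith [h.1, h.2]
          | inr h => linarith [h.1]
        _ ≤ _ := le_max_right _ _
  -- bound x on Icc
  have hbound : ∀ t ∈ Icc (-T) T, |x t| ≤ C := by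
    intro t ht
    have heq : x t = x t₀ + ∫ r in t₀..t, x' r := by
      have := hx t₀ t; linarith
    have h1 : |∫ r in t₀..t, x' r| ≤ ∫ r in Ι t₀ t, |x' r| := by
      simpa [Real.norm_eq_abs] using
        intervalIntegral.norm_integral_le_integral_norm_uIoc (f := x') (a := t₀) (b := t)
        (μ := volume)
    have hsub : Ι t₀ t ⊆ Icc (-T) T := by
      intro r hr
      rw [Set.mem_uIoc] at hr
      rcases hr with ⟨h1, h2⟩ | ⟨h1, h2⟩ <;>
        exact ⟨by linarith [ht₀mem.1, ht.1], by linarith [ht₀mem.2, ht.2]⟩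
    have h2 : (∫ r in Ι t₀ t, |x' r|) ≤ ∫ r in Icc (-T) T, |x' r| := by
      refine setIntegral_mono_set habsint
        (Filter.Eventually.of_forall fun r => abs_nonneg _) ?_
      exact Filter.Eventually.of_forall hsub
    calc |x t| = |x t₀ + ∫ r in t₀..t, x' r| := by rw [heq]
      _ ≤ |x t₀| + |∫ r in t₀..t, x' r| := abs_add_le _ _
      _ ≤ max |M₁| |M₂| + (T + A) := by
          have := h1.trans (h2.trans hIabs)
          linarith
      _ = C := by rw [hCdef]; ring
  -- bound the x² integral
  have hx2Iccint : IntegrableOn (fun t => (x t) ^ 2) (Icc (-T) T) volume :=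
    ((hxc.pow 2).integrableOn_Icc)
  have hIx : (∫ t in Icc (-T) T, (x t) ^ 2) ≤ 2 * T * C ^ 2 := by
    have h1 : (∫ t in Icc (-T) T, (x t) ^ 2) ≤ ∫ _r in Icc (-T) T, C ^ 2 := by
      refine setIntegral_mono_on hx2Iccint (hconstIcc (C ^ 2)) hIcc ?_
      intro t ht
      have h := abs_le.mp (hbound t ht)
      nlinarith
    rw [setIntegral_const, measureReal_def, hvolIcc, smul_eq_mul] at h1
    linarith
  -- conclude
  refine Real.sqrt_le_sqrt ?_
  linarith
end

section
/- Let a : ℝ → ℝ be continuous and bounded with inf a = a(0), and for ε > 0 define B_ε = inf{J_ε(x) : x ∈ W}, where J_ε(x) = ∫(½|ẋ|² + a(εt)Ṽ(x(t))) dt, and B₀ = inf{J₀(x) : x ∈ W} with J₀ using the constant weight a(0). Assume B₀ is attained by some w₀ ∈ W with J₀(w₀) < ∞. Then B_ε → B₀ as ε → 0⁺. -/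
open Set MeasureTheory Filter Topology

/-- `x` belongs to `W`: locally absolutely continuous with derivative `x'`,
`x + 1 ∈ H¹((-∞,0])`, `x - 1 ∈ H¹([0,∞))`. -/
def MemW (x x' : ℝ → ℝ) : Prop :=
  MeasureTheory.LocallyIntegrable x' ∧
  (∀ s t : ℝ, x t - x s = ∫ r in s..t, x' r) ∧
  MeasureTheory.IntegrableOn (fun t => (x t + 1) ^ 2) (Set.Iic 0) ∧
  MeasureTheory.IntegrableOn (fun t => (x t - 1) ^ 2) (Set.Ici 0) ∧
  MeasureTheory.Integrable (fun t => (x' t) ^ 2)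

lemma unbounded_of_not_integrable (v : ℝ → ℝ) (hv : Continuous v) (hv0 : ∀ t, 0 ≤ v t)
    (hni : ¬ MeasureTheory.Integrable v) (R : ℝ) :
    ∃ n : ℕ, R ≤ ∫ t in Set.Icc (-(n:ℝ)) n, v t := by
  by_contra hcon
  push_neg at hcon
  apply hni
  have hmeas : Measurable v := hv.measurable
  have hmono : Monotone (fun n : ℕ => (Set.Icc (-(n:ℝ)) n).indicator
      (fun s => ENNReal.ofReal (v s))) := by
    intro m n hmn
    apply Set.indicator_le_indicator_of_subset
    · exact Set.Icc_subset_Icc (neg_le_neg (by exact_mod_cast hmn)) (by exact_mod_cast hmn)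
    · intro t; exact zero_le
  have hfin : ∫⁻ t, ENNReal.ofReal (v t) ∂volume < ⊤ := by
    have key : ∫⁻ t, ENNReal.ofReal (v t) ∂volume
        = ⨆ n : ℕ, ∫⁻ t in Set.Icc (-(n:ℝ)) n, ENNReal.ofReal (v t) ∂volume := by
      have h1 : ∀ n : ℕ, ∫⁻ t in Set.Icc (-(n:ℝ)) n, ENNReal.ofReal (v t) ∂volume
          = ∫⁻ t, (Set.Icc (-(n:ℝ)) n).indicator (fun s => ENNReal.ofReal (v s)) t ∂volume := by
        intro n
        rw [lintegral_indicator measurableSet_Icc]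
      simp_rw [h1]
      rw [← lintegral_iSup (fun n => (hmeas.ennreal_ofReal).indicator measurableSet_Icc) hmono]
      congr 1
      funext t
      apply le_antisymm
      · refine le_trans (le_of_eq ?_) (le_iSup _ (Nat.ceil |t|))
        rw [Set.indicator_of_mem]
        have : |t| ≤ ((Nat.ceil |t| : ℕ) : ℝ) := Nat.le_ceil _
        exact ⟨by linarith [neg_abs_le t], by linarith [le_abs_self t]⟩
      · exact iSup_le fun n => Set.indicator_le_self' (fun _ _ => zero_le) t
    rw [key]
    have hb : ∀ n : ℕ, ∫⁻ t in Set.Icc (-(n:ℝ)) n, ENNReal.ofReal (v t) ∂volume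
        ≤ ENNReal.ofReal (max R 0) := by
      intro n
      have hint : IntegrableOn v (Set.Icc (-(n:ℝ)) n) := hv.integrableOn_Icc
      rw [← MeasureTheory.ofReal_integral_eq_lintegral_ofReal hint
        (Filter.Eventually.of_forall (fun t => hv0 t))]
      exact ENNReal.ofReal_le_ofReal (le_trans (hcon n).le (le_max_left _ _))
    exact lt_of_le_of_lt (iSup_le hb) (lt_top_iff_ne_top.2 ENNReal.ofReal_ne_top)
  exact ⟨hv.aestronglyMeasurable, by rwa [hasFiniteIntegral_iff_ofReal (.of_forall hv0)]⟩

lemma ae_ne_point (c : ℝ) : ∀ᵐ r : ℝ, r ≠ c := by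
  have : {r : ℝ | ¬ r ≠ c} = {c} := by ext r; simp
  rw [MeasureTheory.ae_iff, this]
  exact Real.volume_singleton

lemma MemW.intervalIntegrable {x x' : ℝ → ℝ} (h : MemW x x') (s t : ℝ) :
    IntervalIntegrable x' volume s t :=
  (h.1.integrableOn_isCompact isCompact_uIcc).intervalIntegrable

lemma MemW.continuous {x x' : ℝ → ℝ} (h : MemW x x') : Continuous x := by
  have hx : x = fun t => x 0 + ∫ r in (0:ℝ)..t, x' r := by
    funext t
    have := h.2.1 0 t
    linarith
  rw [hx]
  exact continuous_const.add
    (intervalIntegral.continuous_primitive (fun a b => h.intervalIntegrable a b) 0)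

lemma truncation (Vt x x' : ℝ → ℝ) (hx : MemW x x') (hVcont : Continuous Vt)
    (hVnonneg : ∀ y, 0 ≤ Vt y) (hV1 : Vt 1 = 0) (hVm1 : Vt (-1) = 0)
    (σ τ : ℝ) (hσ : σ < 0) (hτ : 0 < τ) (hσ1 : |x σ + 1| ≤ 1) (hτ1 : |x τ - 1| ≤ 1)
    (c : ℝ) (hc : c ≤ 0) :
    ∃ y y', MemW y y' ∧
      MeasureTheory.Integrable (fun t => (1/2) * (y' t)^2 + c * Vt (y t)) ∧
      (∫ t, ((1/2) * (y' t)^2 + c * Vt (y t)))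
        ≤ (1/2) * (∫ t, (x' t)^2) + 1 + c * ∫ t in Set.Icc σ τ, Vt (x t) := by
  classical
  set y' : ℝ → ℝ := fun t =>
    if t < σ - 1 then 0 else if t < σ then x σ + 1 else if t ≤ τ then x' t
      else if t ≤ τ + 1 then 1 - x τ else 0 with hy'def
  set y : ℝ → ℝ := fun t => x σ + ∫ r in σ..t, y' r with hydef
  have hστ : σ ≤ τ := le_trans hσ.le hτ.le
  -- measurability of y'
  have hsm : MeasureTheory.AEStronglyMeasurable y' volume := by
    obtain ⟨g, hg_meas, hg_ae⟩ := hx.1.aestronglyMeasurable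
    refine ⟨fun t => if t < σ - 1 then 0 else if t < σ then x σ + 1 else if t ≤ τ then g t
      else if t ≤ τ + 1 then 1 - x τ else 0, ?_, ?_⟩
    · apply StronglyMeasurable.ite (measurableSet_Iio (a := σ - 1)) stronglyMeasurable_const
      apply StronglyMeasurable.ite (measurableSet_Iio (a := σ)) stronglyMeasurable_const
      apply StronglyMeasurable.ite (measurableSet_Iic (a := τ)) hg_meas
      exact StronglyMeasurable.ite (measurableSet_Iic (a := τ+1)) stronglyMeasurable_const
        stronglyMeasurable_const
    · filter_upwards [hg_ae] with t ht
      simp only [hy'def]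
      split_ifs <;> simp [ht]
  -- integrability of y'
  have hxsqI : MeasureTheory.IntegrableOn (fun t => |x' t|) (Set.Icc σ τ) :=
    (hx.1.integrableOn_isCompact isCompact_Icc).norm
  have hy'int : MeasureTheory.Integrable y' := by
    set C : ℝ := |x σ + 1| + |1 - x τ| with hC
    set G : ℝ → ℝ := fun t => (Set.Icc σ τ).indicator (fun s => |x' s|) t
      + (Set.Icc (σ-1) (τ+1)).indicator (fun _ => C) t with hG
    have hGint : MeasureTheory.Integrable G := by
      apply MeasureTheory.Integrable.add
      · exact (MeasureTheory.integrable_indicator_iff measurableSet_Icc).2 hxsqI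
      · exact (MeasureTheory.integrable_indicator_iff measurableSet_Icc).2
          (integrableOn_const measure_Icc_lt_top.ne)
    refine hGint.mono' hsm (Filter.Eventually.of_forall fun t => ?_)
    have hind1 : (0:ℝ) ≤ (Set.Icc σ τ).indicator (fun s => |x' s|) t :=
      Set.indicator_nonneg (fun s _ => abs_nonneg _) t
    have hind2 : (0:ℝ) ≤ (Set.Icc (σ-1) (τ+1)).indicator (fun _ => C) t :=
      Set.indicator_nonneg (fun s _ => by positivity) t
    rw [Real.norm_eq_abs]
    simp only [hy'def]
    split_ifs with h1 h2 h3 h4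
    · simpa using add_nonneg hind1 hind2
    · have ht : t ∈ Set.Icc (σ-1) (τ+1) := ⟨not_lt.1 h1, by linarith⟩
      have hCle : |x σ + 1| ≤ C := by rw [hC]; exact le_add_of_nonneg_right (abs_nonneg _)
      show _ ≤ (Set.Icc σ τ).indicator (fun s => |x' s|) t
        + (Set.Icc (σ-1) (τ+1)).indicator (fun _ => C) t
      rw [Set.indicator_of_mem ht]
      linarith
    · have ht : t ∈ Set.Icc σ τ := ⟨not_lt.1 h2, h3⟩
      show _ ≤ (Set.Icc σ τ).indicator (fun s => |x' s|) t
        + (Set.Icc (σ-1) (τ+1)).indicator (fun _ => C) t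
      rw [Set.indicator_of_mem ht]
      linarith
    · have ht : t ∈ Set.Icc (σ-1) (τ+1) := ⟨by linarith [not_lt.1 h1], h4⟩
      have hCle : |1 - x τ| ≤ C := by rw [hC]; exact le_add_of_nonneg_left (abs_nonneg _)
      show _ ≤ (Set.Icc σ τ).indicator (fun s => |x' s|) t
        + (Set.Icc (σ-1) (τ+1)).indicator (fun _ => C) t
      rw [Set.indicator_of_mem ht]
      linarith
    · simpa using add_nonneg hind1 hind2
  have hy'ii : ∀ s t : ℝ, IntervalIntegrable y' volume s t :=
    fun s t => hy'int.intervalIntegrable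
  -- FTC
  have hftc : ∀ s t : ℝ, y t - y s = ∫ r in s..t, y' r := by
    intro s t
    have := intervalIntegral.integral_add_adjacent_intervals (hy'ii σ s) (hy'ii s t)
    simp only [hydef]
    linarith
  -- y = x on [σ, τ]
  have hyx : ∀ t ∈ Set.Icc σ τ, y t = x t := by
    intro t ht
    have hcong : ∫ r in σ..t, y' r = ∫ r in σ..t, x' r := by
      apply intervalIntegral.integral_congr
      intro r hr
      rw [Set.uIcc_of_le ht.1] at hr
      have h1 : ¬ r < σ - 1 := by simp only [not_lt]; linarith [hr.1]
      have h2 : ¬ r < σ := not_lt.2 hr.1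
      have h3 : r ≤ τ := le_trans hr.2 ht.2
      simp only [hy'def, h1, h2, h3, if_true, if_false]
    simp only [hydef]
    rw [hcong, ← hx.2.1 σ t]
    ring
  -- y = -1 for t ≤ σ - 1
  have hyleft : ∀ t, t ≤ σ - 1 → y t = -1 := by
    intro t ht
    have hsplit := intervalIntegral.integral_add_adjacent_intervals (hy'ii t (σ-1)) (hy'ii (σ-1) σ)
    have h1 : ∫ r in t..(σ-1), y' r = 0 := by
      rw [← intervalIntegral.integral_zero (a := t) (b := σ-1) (μ := volume)]
      apply intervalIntegral.integral_congr_ae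
      filter_upwards [ae_ne_point (σ-1)] with r hr hrmem
      rw [Set.uIoc_of_le ht] at hrmem
      have : r < σ - 1 := lt_of_le_of_ne hrmem.2 hr
      simp only [hy'def, this, if_true]
    have h2 : ∫ r in (σ-1)..σ, y' r = x σ + 1 := by
      have : ∫ r in (σ-1)..σ, y' r = ∫ r in (σ-1)..σ, (x σ + 1) := by
        apply intervalIntegral.integral_congr_ae
        filter_upwards [ae_ne_point σ] with r hr hrmem
        rw [Set.uIoc_of_le (by linarith : σ - 1 ≤ σ)] at hrmem
        have hr1 : ¬ r < σ - 1 := not_lt.2 hrmem.1.le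
        have hr2 : r < σ := lt_of_le_of_ne hrmem.2 hr
        simp only [hy'def, hr1, hr2, if_true, if_false]
      rw [this, intervalIntegral.integral_const]
      simp
    have h3 : ∫ r in t..σ, y' r = x σ + 1 := by rw [← hsplit, h1, h2]; ring
    have h4 := hftc σ t
    have h5 : ∫ r in σ..t, y' r = -(x σ + 1) := by
      rw [← h3]; exact (intervalIntegral.integral_symm t σ)
    simp only [hydef]
    rw [h5]; ring
  -- y = 1 for t ≥ τ + 1
  have hyright : ∀ t, τ + 1 ≤ t → y t = 1 := by
    intro t ht
    have hs1 := intervalIntegral.integral_add_adjacent_intervals (hy'ii σ τ) (hy'ii τ (τ+1))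
    have hs2 := intervalIntegral.integral_add_adjacent_intervals (hy'ii σ (τ+1)) (hy'ii (τ+1) t)
    have h1 : ∫ r in σ..τ, y' r = x τ - x σ := by
      have hcong : ∫ r in σ..τ, y' r = ∫ r in σ..τ, x' r := by
        apply intervalIntegral.integral_congr
        intro r hr
        rw [Set.uIcc_of_le hστ] at hr
        have h1 : ¬ r < σ - 1 := by simp only [not_lt]; linarith [hr.1]
        have h2 : ¬ r < σ := not_lt.2 hr.1
        simp only [hy'def, h1, h2, hr.2, if_true, if_false]
      rw [hcong, ← hx.2.1 σ τ]
    have h2 : ∫ r in τ..(τ+1), y' r = 1 - x τ := by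
      have : ∫ r in τ..(τ+1), y' r = ∫ r in τ..(τ+1), (1 - x τ) := by
        apply intervalIntegral.integral_congr_ae
        filter_upwards with r hrmem
        rw [Set.uIoc_of_le (by linarith : τ ≤ τ + 1)] at hrmem
        have hr1 : ¬ r < σ - 1 := by simp only [not_lt]; linarith [hrmem.1]
        have hr2 : ¬ r < σ := by simp only [not_lt]; linarith [hrmem.1]
        have hr3 : ¬ r ≤ τ := not_le.2 hrmem.1
        simp only [hy'def, hr1, hr2, hr3, hrmem.2, if_true, if_false]
      rw [this, intervalIntegral.integral_const]
      simp
    have h3 : ∫ r in (τ+1)..t, y' r = 0 := by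
      rw [← intervalIntegral.integral_zero (a := τ+1) (b := t) (μ := volume)]
      apply intervalIntegral.integral_congr_ae
      filter_upwards with r hrmem
      rw [Set.uIoc_of_le ht] at hrmem
      have hr1 : ¬ r < σ - 1 := by simp only [not_lt]; linarith [hrmem.1]
      have hr2 : ¬ r < σ := by simp only [not_lt]; linarith [hrmem.1]
      have hr3 : ¬ r ≤ τ := by simp only [not_le]; linarith [hrmem.1]
      have hr4 : ¬ r ≤ τ + 1 := not_le.2 hrmem.1
      simp only [hy'def, hr1, hr2, hr3, hr4, if_false]
    simp only [hydef]
    rw [← hs2, ← hs1, h1, h2, h3]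
    ring
  have hycont : Continuous y := by
    apply continuous_const.add
    exact intervalIntegral.continuous_primitive hy'ii σ
  -- integrability of y'^2
  set G2 : ℝ → ℝ := fun t => (Set.Icc σ τ).indicator (fun s => (x' s)^2) t
    + (Set.Icc (σ-1) σ).indicator (fun _ => (x σ + 1)^2) t
    + (Set.Icc τ (τ+1)).indicator (fun _ => (1 - x τ)^2) t with hG2
  have hG2a : MeasureTheory.Integrable ((Set.Icc σ τ).indicator (fun s => (x' s)^2)) :=
    (MeasureTheory.integrable_indicator_iff measurableSet_Icc).2
      (hx.2.2.2.2.integrableOn)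
  have hG2b : MeasureTheory.Integrable ((Set.Icc (σ-1) σ).indicator (fun _ : ℝ => (x σ + 1)^2)) :=
    (MeasureTheory.integrable_indicator_iff measurableSet_Icc).2
      (integrableOn_const measure_Icc_lt_top.ne)
  have hG2c : MeasureTheory.Integrable ((Set.Icc τ (τ+1)).indicator (fun _ : ℝ => (1 - x τ)^2)) :=
    (MeasureTheory.integrable_indicator_iff measurableSet_Icc).2
      (integrableOn_const measure_Icc_lt_top.ne)
  have hG2int : MeasureTheory.Integrable G2 := (hG2a.add hG2b).add hG2c
  have hy'sqsm : MeasureTheory.AEStronglyMeasurable (fun t => (y' t)^2) volume := by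
    have : (fun t => (y' t)^2) = fun t => y' t * y' t := by funext t; ring
    rw [this]; exact hsm.mul hsm
  have hG2le : ∀ t, (y' t)^2 ≤ G2 t := by
    intro t
    have hind1 : (0:ℝ) ≤ (Set.Icc σ τ).indicator (fun s => (x' s)^2) t :=
      Set.indicator_nonneg (fun s _ => sq_nonneg _) t
    have hind2 : (0:ℝ) ≤ (Set.Icc (σ-1) σ).indicator (fun _ => (x σ + 1)^2) t :=
      Set.indicator_nonneg (fun s _ => sq_nonneg _) t
    have hind3 : (0:ℝ) ≤ (Set.Icc τ (τ+1)).indicator (fun _ => (1 - x τ)^2) t :=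
      Set.indicator_nonneg (fun s _ => sq_nonneg _) t
    show (y' t)^2 ≤ (Set.Icc σ τ).indicator (fun s => (x' s)^2) t
      + (Set.Icc (σ-1) σ).indicator (fun _ => (x σ + 1)^2) t
      + (Set.Icc τ (τ+1)).indicator (fun _ => (1 - x τ)^2) t
    simp only [hy'def]
    split_ifs with h1 h2 h3 h4
    · simpa using by linarith
    · have ht : t ∈ Set.Icc (σ-1) σ := ⟨not_lt.1 h1, h2.le⟩
      rw [Set.indicator_of_mem ht]
      linarith
    · have ht : t ∈ Set.Icc σ τ := ⟨not_lt.1 h2, h3⟩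
      rw [Set.indicator_of_mem ht]
      linarith
    · have ht : t ∈ Set.Icc τ (τ+1) := ⟨(not_le.1 h3).le, h4⟩
      rw [Set.indicator_of_mem ht]
      linarith
    · simpa using by linarith
  have hy'sq : MeasureTheory.Integrable (fun t => (y' t)^2) := by
    refine hG2int.mono' hy'sqsm (Filter.Eventually.of_forall fun t => ?_)
    rw [Real.norm_eq_abs, abs_of_nonneg (sq_nonneg _)]
    exact hG2le t
  -- MemW y y'
  have hWy : MemW y y' := by
    refine ⟨hy'int.locallyIntegrable, hftc, ?_, ?_, hy'sq⟩
    · have p1 : MeasureTheory.IntegrableOn (fun t => (y t + 1)^2) (Set.Iic (σ-1)) := by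
        apply (MeasureTheory.integrableOn_congr_fun ?_ measurableSet_Iic).2
          (MeasureTheory.integrableOn_zero)
        intro t ht
        show (y t + 1)^2 = 0
        rw [hyleft t ht]
        norm_num
      have p2 : MeasureTheory.IntegrableOn (fun t => (y t + 1)^2) (Set.Icc (σ-1) σ) :=
        (((hycont.add continuous_const).pow 2).integrableOn_Icc)
      have p3 : MeasureTheory.IntegrableOn (fun t => (y t + 1)^2) (Set.Icc σ 0) := by
        apply (MeasureTheory.integrableOn_congr_fun ?_ measurableSet_Icc).2
          (hx.2.2.1.mono_set (fun t ht => ht.2))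
        intro t ht
        show (y t + 1)^2 = (x t + 1)^2
        rw [hyx t ⟨ht.1, le_trans ht.2 hτ.le⟩]
      refine ((p1.union p2).union p3).mono_set ?_
      intro t (ht : t ≤ 0)
      by_cases h1 : t ≤ σ - 1
      · exact Or.inl (Or.inl h1)
      · by_cases h2 : t ≤ σ
        · exact Or.inl (Or.inr ⟨(not_le.1 h1).le, h2⟩)
        · exact Or.inr ⟨(not_le.1 h2).le, ht⟩
    · have p1 : MeasureTheory.IntegrableOn (fun t => (y t - 1)^2) (Set.Ici (τ+1)) := by
        apply (MeasureTheory.integrableOn_congr_fun ?_ measurableSet_Ici).2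
          (MeasureTheory.integrableOn_zero)
        intro t ht
        show (y t - 1)^2 = 0
        rw [hyright t ht]
        norm_num
      have p2 : MeasureTheory.IntegrableOn (fun t => (y t - 1)^2) (Set.Icc τ (τ+1)) :=
        (((hycont.sub continuous_const).pow 2).integrableOn_Icc)
      have p3 : MeasureTheory.IntegrableOn (fun t => (y t - 1)^2) (Set.Icc 0 τ) := by
        apply (MeasureTheory.integrableOn_congr_fun ?_ measurableSet_Icc).2
          (hx.2.2.2.1.mono_set (fun t ht => ht.1))
        intro t ht
        show (y t - 1)^2 = (x t - 1)^2
        rw [hyx t ⟨le_trans hσ.le ht.1, ht.2⟩]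
      refine ((p1.union p2).union p3).mono_set ?_
      intro t (ht : 0 ≤ t)
      by_cases h1 : τ + 1 ≤ t
      · exact Or.inl (Or.inl h1)
      · by_cases h2 : τ ≤ t
        · exact Or.inl (Or.inr ⟨h2, (not_le.1 h1).le⟩)
        · exact Or.inr ⟨ht, (not_le.1 h2).le⟩
  -- integrability of the functional
  have hhalf : MeasureTheory.Integrable (fun t => (1/2) * (y' t)^2) := hy'sq.const_mul _
  have hVy : MeasureTheory.Integrable (fun t => Vt (y t)) := by
    apply (hVcont.comp hycont).integrable_of_hasCompactSupport
    apply HasCompactSupport.intro (isCompact_Icc (a := σ-1) (b := τ+1))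
    intro t ht
    simp only [Set.mem_Icc, not_and_or, not_le] at ht
    show Vt (y t) = 0
    rcases ht with ht | ht
    · rw [hyleft t (by linarith)]; exact hVm1
    · rw [hyright t (by linarith)]; exact hV1
  have hFint : MeasureTheory.Integrable (fun t => (1/2) * (y' t)^2 + c * Vt (y t)) :=
    hhalf.add (hVy.const_mul c)
  refine ⟨y, y', hWy, hFint, ?_⟩
  rw [MeasureTheory.integral_add hhalf (hVy.const_mul c), MeasureTheory.integral_const_mul,
    MeasureTheory.integral_const_mul]
  -- bound the kinetic part
  have hsqle : ∫ t, (y' t)^2 ≤ (∫ t, (x' t)^2) + 2 := by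
    have h1 : ∫ t, (y' t)^2 ≤ ∫ t, G2 t :=
      MeasureTheory.integral_mono hy'sq hG2int hG2le
    have e1 : ∫ t, G2 t = (∫ t, ((Set.Icc σ τ).indicator (fun s => (x' s)^2) t
          + (Set.Icc (σ-1) σ).indicator (fun _ => (x σ + 1)^2) t))
        + ∫ t, (Set.Icc τ (τ+1)).indicator (fun _ => (1 - x τ)^2) t :=
      MeasureTheory.integral_add (hG2a.add hG2b) hG2c
    have e2 : ∫ t, ((Set.Icc σ τ).indicator (fun s => (x' s)^2) t
          + (Set.Icc (σ-1) σ).indicator (fun _ => (x σ + 1)^2) t)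
        = (∫ t, (Set.Icc σ τ).indicator (fun s => (x' s)^2) t)
          + ∫ t, (Set.Icc (σ-1) σ).indicator (fun _ => (x σ + 1)^2) t :=
      MeasureTheory.integral_add hG2a hG2b
    have e3 : ∫ t, (Set.Icc σ τ).indicator (fun s => (x' s)^2) t
        = ∫ t in Set.Icc σ τ, (x' t)^2 :=
      MeasureTheory.integral_indicator measurableSet_Icc
    have e4 : ∫ t, (Set.Icc (σ-1) σ).indicator (fun _ => (x σ + 1)^2) t
        = (x σ + 1)^2 * ((volume (Set.Icc (σ-1) σ)).toReal) := by
      rw [MeasureTheory.integral_indicator measurableSet_Icc,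
        MeasureTheory.setIntegral_const, smul_eq_mul, mul_comm, Measure.real]
    have e5 : ∫ t, (Set.Icc τ (τ+1)).indicator (fun _ => (1 - x τ)^2) t
        = (1 - x τ)^2 * ((volume (Set.Icc τ (τ+1))).toReal) := by
      rw [MeasureTheory.integral_indicator measurableSet_Icc,
        MeasureTheory.setIntegral_const, smul_eq_mul, mul_comm, Measure.real]
    have h2 : ∫ t, G2 t = (∫ t in Set.Icc σ τ, (x' t)^2)
        + (x σ + 1)^2 * ((volume (Set.Icc (σ-1) σ)).toReal)
        + (1 - x τ)^2 * ((volume (Set.Icc τ (τ+1))).toReal) := by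
      rw [e1, e2, e3, e4, e5]
    have h3 : (volume (Set.Icc (σ-1) σ)).toReal = 1 := by
      rw [Real.volume_Icc]
      norm_num
    have h4 : (volume (Set.Icc τ (τ+1))).toReal = 1 := by
      rw [Real.volume_Icc]
      norm_num
    have h5 : ∫ t in Set.Icc σ τ, (x' t)^2 ≤ ∫ t, (x' t)^2 :=
      MeasureTheory.setIntegral_le_integral hx.2.2.2.2
        (Filter.Eventually.of_forall fun t => sq_nonneg _)
    have h6 : (x σ + 1)^2 ≤ 1 := by
      nlinarith [abs_nonneg (x σ + 1), sq_abs (x σ + 1)]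
    have h7 : (1 - x τ)^2 ≤ 1 := by
      have : |1 - x τ| ≤ 1 := by rw [abs_sub_comm]; exact hτ1
      nlinarith [abs_nonneg (1 - x τ), sq_abs (1 - x τ)]
    rw [h2, h3, h4] at h1
    linarith
  -- bound the potential part
  have hVle : c * ∫ t, Vt (y t) ≤ c * ∫ t in Set.Icc σ τ, Vt (x t) := by
    have h1 : ∫ t in Set.Icc σ τ, Vt (y t) = ∫ t in Set.Icc σ τ, Vt (x t) := by
      apply MeasureTheory.setIntegral_congr_fun measurableSet_Icc
      intro t ht
      show Vt (y t) = Vt (x t)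
      rw [hyx t ht]
    have h2 : ∫ t in Set.Icc σ τ, Vt (y t) ≤ ∫ t, Vt (y t) :=
      MeasureTheory.setIntegral_le_integral hVy
        (Filter.Eventually.of_forall fun t => hVnonneg _)
    rw [← h1]
    exact mul_le_mul_of_nonpos_left h2 hc
  linarith

lemma near_one {x x' : ℝ → ℝ} (hx : MemW x x') (δ : ℝ) (hδ : 0 < δ) (N : ℝ) :
    ∃ t, N ≤ t ∧ |x t - 1| < δ := by
  by_contra hcon
  push_neg at hcon
  set N' := max N 0 with hN'
  have hsub : Set.Ici N' ⊆ Set.Ici (0:ℝ) := Ici_subset_Ici.2 (le_max_right _ _)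
  have hI' : IntegrableOn (fun t => (x t - 1) ^ 2) (Set.Ici N') := hx.2.2.2.1.mono_set hsub
  have hconst : Integrable (fun _ : ℝ => δ ^ 2) (volume.restrict (Set.Ici N')) := by
    refine hI'.mono' aestronglyMeasurable_const ?_
    rw [ae_restrict_iff' measurableSet_Ici]
    filter_upwards with t ht
    have h1 : δ ≤ |x t - 1| := hcon t (le_trans (le_max_left _ _) ht)
    have h2 : δ ^ 2 ≤ (x t - 1) ^ 2 := by
      calc δ ^ 2 ≤ |x t - 1| ^ 2 := by nlinarith [abs_nonneg (x t - 1)]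
      _ = (x t - 1) ^ 2 := sq_abs _
    rw [Real.norm_eq_abs, abs_of_nonneg (by positivity)]
    exact h2
  rw [integrable_const_iff] at hconst
  rcases hconst with h | h
  · nlinarith
  · have h := h.measure_univ_lt_top
    rw [Measure.restrict_apply_univ, Real.volume_Ici] at h
    exact (lt_irrefl _ h).elim

lemma near_negone {x x' : ℝ → ℝ} (hx : MemW x x') (δ : ℝ) (hδ : 0 < δ) (N : ℝ) :
    ∃ t, t ≤ N ∧ |x t + 1| < δ := by
  by_contra hcon
  push_neg at hcon
  set N' := min N 0 with hN'
  have hsub : Set.Iic N' ⊆ Set.Iic (0:ℝ) := Iic_subset_Iic.2 (min_le_right _ _)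
  have hI' : IntegrableOn (fun t => (x t + 1) ^ 2) (Set.Iic N') := hx.2.2.1.mono_set hsub
  have hconst : Integrable (fun _ : ℝ => δ ^ 2) (volume.restrict (Set.Iic N')) := by
    refine hI'.mono' aestronglyMeasurable_const ?_
    rw [ae_restrict_iff' measurableSet_Iic]
    filter_upwards with t ht
    have h1 : δ ≤ |x t + 1| := hcon t (le_trans ht (min_le_left _ _))
    have h2 : δ ^ 2 ≤ (x t + 1) ^ 2 := by
      calc δ ^ 2 ≤ |x t + 1| ^ 2 := by nlinarith [abs_nonneg (x t + 1)]
      _ = (x t + 1) ^ 2 := sq_abs _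
    rw [Real.norm_eq_abs, abs_of_nonneg (by positivity)]
    exact h2
  rw [integrable_const_iff] at hconst
  rcases hconst with h | h
  · nlinarith
  · have h := h.measure_univ_lt_top
    rw [Measure.restrict_apply_univ, Real.volume_Iic] at h
    exact (lt_irrefl _ h).elim

lemma qmp_mul_left {l : ℝ} (hl : l ≠ 0) :
    MeasureTheory.Measure.QuasiMeasurePreserving (fun t : ℝ => l * t) volume volume := by
  refine ⟨(measurable_const_mul l), ?_⟩
  rw [Real.map_volume_mul_left hl]
  exact MeasureTheory.Measure.smul_absolutelyContinuous

lemma comp_integrable {F : ℝ → ℝ} (hF : MeasureTheory.Integrable F) {l : ℝ} (hl : l ≠ 0) :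
    MeasureTheory.Integrable (fun t => F (l * t)) :=
  (MeasureTheory.integrable_comp_mul_left_iff F hl).2 hF

-- scaled membership
lemma scaling_memW (Vt : ℝ → ℝ) (w w' : ℝ → ℝ) (hw : MemW w w') (l : ℝ) (hl : 0 < l) :
    MemW (fun t => w (l * t)) (fun t => l * w' (l * t)) := by
  have hl' : l ≠ 0 := ne_of_gt hl
  have hsm : MeasureTheory.AEStronglyMeasurable (fun t : ℝ => w' (l * t)) volume :=
    hw.1.aestronglyMeasurable.comp_quasiMeasurePreserving (qmp_mul_left hl')
  have hsq : MeasureTheory.Integrable (fun t => (l * w' (l * t)) ^ 2) := by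
    have h1 : MeasureTheory.Integrable (fun t => (w' (l * t)) ^ 2) :=
      comp_integrable hw.2.2.2.2 hl'
    have := h1.const_mul (l ^ 2)
    refine this.congr (Filter.Eventually.of_forall fun t => ?_)
    ring
  refine ⟨?_, ?_, ?_, ?_, hsq⟩
  · -- locally integrable
    have hmem : MeasureTheory.MemLp (fun t => l * w' (l * t)) 2 volume := by
      rw [MeasureTheory.memLp_two_iff_integrable_sq (hsm.const_mul l)]
      exact hsq
    exact hmem.locallyIntegrable (by norm_num)
  · intro s t
    have key : ∫ r in s..t, l * w' (l * r) = ∫ r in l*s..l*t, w' r := by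
      rw [← intervalIntegral.smul_integral_comp_mul_left w' l]
      simp [intervalIntegral.integral_const_mul, smul_eq_mul]
    rw [key]
    exact hw.2.1 (l*s) (l*t)
  · -- (w(lt)+1)^2 on Iic 0
    have hG : MeasureTheory.Integrable ((Set.Iic (0:ℝ)).indicator (fun t => (w t + 1)^2)) := by
      rw [MeasureTheory.integrable_indicator_iff measurableSet_Iic]
      exact hw.2.2.1
    have := comp_integrable hG hl'
    rw [← MeasureTheory.integrable_indicator_iff measurableSet_Iic]
    refine this.congr (Filter.Eventually.of_forall fun t => ?_)
    have hiff : l * t ≤ 0 ↔ t ≤ 0 := by constructor <;> intro h <;> nlinarith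
    simp only [Set.indicator, Set.mem_Iic, hiff]
  · have hG : MeasureTheory.Integrable ((Set.Ici (0:ℝ)).indicator (fun t => (w t - 1)^2)) := by
      rw [MeasureTheory.integrable_indicator_iff measurableSet_Ici]
      exact hw.2.2.2.1
    have := comp_integrable hG hl'
    rw [← MeasureTheory.integrable_indicator_iff measurableSet_Ici]
    refine this.congr (Filter.Eventually.of_forall fun t => ?_)
    have hiff : 0 ≤ l * t ↔ 0 ≤ t := by constructor <;> intro h <;> nlinarith
    simp only [Set.indicator, Set.mem_Ici, hiff]

lemma scaling_value (Vt : ℝ → ℝ) (w w' : ℝ → ℝ) (hw : MemW w w')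
    (hV : MeasureTheory.Integrable (fun t => Vt (w t))) (l : ℝ) (hl : 0 < l) (c : ℝ) :
    ∫ t, ((1/2) * (l * w' (l * t)) ^ 2 + c * Vt (w (l * t)))
      = l * (∫ t, (1/2) * (w' t) ^ 2) + (c / l) * ∫ t, Vt (w t) := by
  have hl' : l ≠ 0 := ne_of_gt hl
  have key := MeasureTheory.Measure.integral_comp_mul_left
    (fun s => (1/2) * l^2 * (w' s)^2 + c * Vt (w s)) l
  have heq : (fun t => (1/2) * (l * w' (l * t)) ^ 2 + c * Vt (w (l * t)))
      = fun t => (1/2) * l^2 * (w' (l*t))^2 + c * Vt (w (l * t)) := by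
    funext t; ring
  rw [heq]
  rw [key, smul_eq_mul]
  have hsq : MeasureTheory.Integrable (fun s => (1/2) * l^2 * (w' s)^2) :=
    hw.2.2.2.2.const_mul _
  have hVc : MeasureTheory.Integrable (fun s => c * Vt (w s)) := hV.const_mul _
  rw [MeasureTheory.integral_add hsq hVc, MeasureTheory.integral_const_mul,
    MeasureTheory.integral_const_mul]
  have h3 : ∫ t, (1/2) * (w' t)^2 = (1/2) * ∫ t, (w' t)^2 :=
    MeasureTheory.integral_const_mul _ _
  rw [h3, abs_of_pos (inv_pos.2 hl)]
  field_simp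

theorem stmt13 (a Vt : ℝ → ℝ) (Beps : ℝ → ℝ) (B0 : ℝ)
    (ha_cont : Continuous a) (ha_bdd : ∃ M, ∀ t, |a t| ≤ M)
    (ha_min : ∀ t, a 0 ≤ a t)
    (hVcont : Continuous Vt) (hVnonneg : ∀ y, 0 ≤ Vt y)
    (hB0 : IsGLB {c | ∃ x x', MemW x x' ∧
      (∫ t, ((1 / 2) * (x' t) ^ 2 + a 0 * Vt (x t))) = c} B0)
    (hBe : ∀ ε > (0 : ℝ), IsGLB {c | ∃ x x', MemW x x' ∧
      (∫ t, ((1 / 2) * (x' t) ^ 2 + a (ε * t) * Vt (x t))) = c} (Beps ε))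
    (w₀ w₀' : ℝ → ℝ) (hw₀ : MemW w₀ w₀')
    (hw₀V : MeasureTheory.Integrable (fun t => Vt (w₀ t)))
    (hw₀att : (∫ t, ((1 / 2) * (w₀' t) ^ 2 + a 0 * Vt (w₀ t))) = B0) :
    Filter.Tendsto Beps (nhdsWithin 0 (Set.Ioi 0)) (nhds B0) := by
  obtain ⟨M, hM⟩ := ha_bdd
  have hM0 : 0 ≤ M := le_trans (abs_nonneg _) (hM 0)
  have hw₀cont : Continuous w₀ := hw₀.continuous
  have hw₀sq : Integrable (fun t => (1/2) * (w₀' t)^2) := hw₀.2.2.2.2.const_mul _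
  -- scaling bound : for every l > 0, B0 ≤ l * K + (a 0 / l) * D
  set K : ℝ := ∫ t, (1/2) * (w₀' t)^2 with hK
  set D : ℝ := ∫ t, Vt (w₀ t) with hD
  have hscale : ∀ l : ℝ, 0 < l → B0 ≤ l * K + (a 0 / l) * D := by
    intro l hl
    have hmem := scaling_memW Vt w₀ w₀' hw₀ l hl
    have hval := scaling_value Vt w₀ w₀' hw₀ hw₀V l hl (a 0)
    have := hB0.1 ⟨fun t => w₀ (l * t), fun t => l * w₀' (l * t), hmem, rfl⟩
    rwa [hval] at this
  have hDnonneg : 0 ≤ D := integral_nonneg fun t => hVnonneg _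
  -- lower bound : B0 ≤ Beps ε  for all ε > 0
  have hBle : ∀ ε : ℝ, 0 < ε → B0 ≤ Beps ε := by
    intro ε hε
    apply (hBe ε hε).2
    rintro c ⟨x, x', hx, rfl⟩
    have hxcont : Continuous x := hx.continuous
    have hvcont : Continuous (fun t => Vt (x t)) := hVcont.comp hxcont
    have hhalfx : Integrable (fun t => (1/2) * (x' t)^2) := hx.2.2.2.2.const_mul _
    by_cases hv : Integrable (fun t => Vt (x t))
    · -- comparison case
      have hf : Integrable (fun t => (1/2) * (x' t)^2 + a 0 * Vt (x t)) :=
        hhalfx.add (hv.const_mul _)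
      have hgsm : AEStronglyMeasurable (fun t => a (ε * t) * Vt (x t)) volume :=
        ((ha_cont.comp (continuous_const.mul continuous_id)).mul hvcont).aestronglyMeasurable
      have hgV : Integrable (fun t => a (ε * t) * Vt (x t)) := by
        refine (hv.const_mul M).mono' hgsm (Filter.Eventually.of_forall fun t => ?_)
        rw [Real.norm_eq_abs, abs_mul, abs_of_nonneg (hVnonneg _)]
        exact mul_le_mul_of_nonneg_right (hM _) (hVnonneg _)
      have hg : Integrable (fun t => (1/2) * (x' t)^2 + a (ε * t) * Vt (x t)) :=
        hhalfx.add hgV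
      refine le_trans (hB0.1 ⟨x, x', hx, rfl⟩) (integral_mono hf hg fun t => ?_)
      exact add_le_add (le_refl _) (mul_le_mul_of_nonneg_right (ha_min _) (hVnonneg _))
    · rcases lt_trichotomy (a 0) 0 with ha0 | ha0 | ha0
      · -- a 0 < 0 : impossible
        exfalso
        rcases hDnonneg.lt_or_eq with hDpos | hDeq
        · -- D > 0 : scaling gives unbounded below
          set l : ℝ := min 1 ((-(a 0)) * D / (|B0| + |K| + 1)) with hl
          have hlpos : 0 < l := by
            apply lt_min one_pos
            apply div_pos (by nlinarith) (by positivity)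
          have h1 := hscale l hlpos
          have hlK : l * K ≤ |K| := by
            rcases le_or_gt K 0 with h | h
            · nlinarith [abs_nonneg K]
            · have : l ≤ 1 := min_le_left _ _
              have := le_abs_self K
              nlinarith
          have hl2 : l ≤ (-(a 0)) * D / (|B0| + |K| + 1) := min_le_right _ _
          have hden : (0:ℝ) < |B0| + |K| + 1 := by positivity
          have hkey : (a 0 / l) * D ≤ -(|B0| + |K| + 1) := by
            rw [div_mul_eq_mul_div, div_le_iff₀ hlpos]
            have h3 : l * (|B0| + |K| + 1) ≤ (-(a 0)) * D := by
              rw [← div_mul_cancel₀ ((-(a 0)) * D) (ne_of_gt hden)]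
              exact mul_le_mul_of_nonneg_right hl2 hden.le
            nlinarith
          have : B0 ≤ -|B0| - 1 := by linarith
          have := neg_abs_le B0
          linarith
        · -- D = 0 : V ∘ w₀ ≡ 0, then V (±1) = 0 and truncation argument
          have hae : (fun t => Vt (w₀ t)) =ᵐ[volume] (fun _ => (0:ℝ)) :=
            (integral_eq_zero_iff_of_nonneg (fun t => hVnonneg _) hw₀V).1 hDeq.symm
          have hVw0 : ∀ t, Vt (w₀ t) = 0 := by
            have := (Continuous.ae_eq_iff_eq volume (hVcont.comp hw₀cont)
              continuous_const).1 hae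
            intro t; exact congrFun this t
          have hVpt : ∀ b : ℝ, (∀ δ > (0:ℝ), ∃ t, |w₀ t - b| < δ) → Vt b = 0 := by
            intro b hb
            by_contra hVb
            have hVbpos : 0 < Vt b := lt_of_le_of_ne (hVnonneg b) (Ne.symm hVb)
            obtain ⟨δ, hδ, hδ'⟩ := Metric.continuousAt_iff.1 (hVcont.continuousAt (x := b))
              (Vt b / 2) (by linarith)
            obtain ⟨t, ht⟩ := hb δ hδ
            have := hδ' (by rw [Real.dist_eq]; exact ht)
            rw [hVw0 t, Real.dist_eq] at this
            rw [abs_sub_comm, sub_zero, abs_of_pos hVbpos] at this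
            linarith
          have hV1 : Vt 1 = 0 := by
            apply hVpt
            intro δ hδ
            obtain ⟨t, _, ht⟩ := near_one hw₀ δ hδ 0
            exact ⟨t, ht⟩
          have hVm1 : Vt (-1) = 0 := by
            apply hVpt
            intro δ hδ
            obtain ⟨t, _, ht⟩ := near_negone hw₀ δ hδ 0
            refine ⟨t, ?_⟩
            have : w₀ t - -1 = w₀ t + 1 := by ring
            rw [this]
            exact ht
          -- choose R so that the truncated energy is below B0
          set R : ℝ := (B0 - (1/2) * (∫ t, (x' t)^2) - 2) / (a 0) with hR
          obtain ⟨n, hn⟩ := unbounded_of_not_integrable _ hvcont (fun t => hVnonneg _)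
            hv (max R 0)
          obtain ⟨τ, hτge, hτnear⟩ := near_one hx 1 one_pos (max n 1)
          obtain ⟨σ, hσle, hσnear⟩ := near_negone hx 1 one_pos (min (-(n:ℝ)) (-1))
          have hσ0 : σ < 0 := lt_of_le_of_lt (le_trans hσle (min_le_right _ _)) (by norm_num)
          have hτ0 : 0 < τ := lt_of_lt_of_le one_pos (le_trans (le_max_right _ _) hτge)
          have hsub : Set.Icc (-(n:ℝ)) n ⊆ Set.Icc σ τ :=
            Set.Icc_subset_Icc (le_trans hσle (min_le_left _ _))
              (le_trans (le_max_left _ _) hτge)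
          have hmono : ∫ t in Set.Icc (-(n:ℝ)) n, Vt (x t) ≤ ∫ t in Set.Icc σ τ, Vt (x t) :=
            setIntegral_mono_set hvcont.integrableOn_Icc
              (Filter.Eventually.of_forall fun t => hVnonneg _)
              (HasSubset.Subset.eventuallyLE hsub)
          obtain ⟨y, y', hWy, hFint, hbound⟩ := truncation Vt x x' hx hVcont hVnonneg
            hV1 hVm1 σ τ hσ0 hτ0 hσnear.le hτnear.le (a 0) ha0.le
          have hB0y : B0 ≤ ∫ t, ((1/2) * (y' t)^2 + a 0 * Vt (y t)) :=
            hB0.1 ⟨y, y', hWy, rfl⟩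
          have hRle : R ≤ ∫ t in Set.Icc σ τ, Vt (x t) :=
            le_trans (le_max_left _ _) (le_trans hn hmono)
          have haR : a 0 * ∫ t in Set.Icc σ τ, Vt (x t) ≤ a 0 * R :=
            mul_le_mul_of_nonpos_left hRle ha0.le
          have haRval : a 0 * R = B0 - (1/2) * (∫ t, (x' t)^2) - 2 := by
            rw [hR, mul_div_cancel₀ _ (ne_of_lt ha0)]
          linarith
      · -- a 0 = 0
        have hB00 : B0 ≤ 0 := by
          by_contra hpos
          push_neg at hpos
          set l : ℝ := B0 / (2 * (|K| + 1)) with hl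
          have hlpos : 0 < l := by positivity
          have h1 := hscale l hlpos
          rw [ha0] at h1
          simp only [zero_div, zero_mul, add_zero] at h1
          have h2 : l * K ≤ l * |K| := mul_le_mul_of_nonneg_left (le_abs_self K) hlpos.le
          have h3 : l * |K| < B0 := by
            rw [hl]
            rw [div_mul_eq_mul_div, div_lt_iff₀ (by positivity)]
            nlinarith [abs_nonneg K]
          linarith
        refine le_trans hB00 (integral_nonneg fun t => ?_)
        have h4 : 0 ≤ a (ε * t) := by rw [← ha0]; exact ha_min _
        have := hVnonneg (x t)
        positivity
      · -- a 0 > 0 : both integrals are junk 0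
        have hfnot : ¬ Integrable (fun t => (1/2) * (x' t)^2 + a 0 * Vt (x t)) := by
          intro hf
          apply hv
          have h1 : Integrable (fun t =>
              ((1/2) * (x' t)^2 + a 0 * Vt (x t)) - (1/2) * (x' t)^2) := hf.sub hhalfx
          have h2 := h1.const_mul (a 0)⁻¹
          refine h2.congr (Filter.Eventually.of_forall fun t => ?_)
          field_simp
          ring
        have hgnot : ¬ Integrable (fun t => (1/2) * (x' t)^2 + a (ε * t) * Vt (x t)) := by
          intro hg
          apply hv
          have h1 : Integrable (fun t =>
              ((1/2) * (x' t)^2 + a (ε * t) * Vt (x t)) - (1/2) * (x' t)^2) := hg.sub hhalfx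
          have h2 : Integrable (fun t => a 0 * Vt (x t)) := by
            refine h1.mono' ((continuous_const.mul hvcont).aestronglyMeasurable)
              (Filter.Eventually.of_forall fun t => ?_)
            rw [Real.norm_eq_abs, abs_mul, abs_of_pos ha0, abs_of_nonneg (hVnonneg _)]
            have : a 0 * Vt (x t) ≤ a (ε * t) * Vt (x t) :=
              mul_le_mul_of_nonneg_right (ha_min _) (hVnonneg _)
            calc a 0 * Vt (x t) ≤ a (ε * t) * Vt (x t) := this
            _ ≤ _ := by
              show _ ≤ (1/2) * (x' t)^2 + a (ε*t) * Vt (x t) - (1/2) * (x' t)^2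
              linarith
          have h3 := h2.const_mul (a 0)⁻¹
          refine h3.congr (Filter.Eventually.of_forall fun t => ?_)
          field_simp
        have h0 : B0 ≤ 0 := by
          have := hB0.1 ⟨x, x', hx, rfl⟩
          rwa [integral_undef hfnot] at this
        rw [integral_undef hgnot]
        exact h0
  -- upper bound : Beps ε ≤ J_ε(w₀) which tends to B0
  have haV : ∀ ε : ℝ, Integrable (fun t => a (ε * t) * Vt (w₀ t)) := by
    intro ε
    have hsm : AEStronglyMeasurable (fun t => a (ε * t) * Vt (w₀ t)) volume :=
      ((ha_cont.comp (continuous_const.mul continuous_id)).mul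
        (hVcont.comp hw₀cont)).aestronglyMeasurable
    refine (hw₀V.const_mul M).mono' hsm (Filter.Eventually.of_forall fun t => ?_)
    rw [Real.norm_eq_abs, abs_mul, abs_of_nonneg (hVnonneg _)]
    exact mul_le_mul_of_nonneg_right (hM _) (hVnonneg _)
  have htend : Tendsto (fun ε => ∫ t, ((1/2) * (w₀' t)^2 + a (ε * t) * Vt (w₀ t)))
      (nhdsWithin 0 (Set.Ioi 0)) (nhds B0) := by
    rw [← hw₀att]
    apply MeasureTheory.tendsto_integral_filter_of_dominated_convergence
      (bound := fun t => (1/2) * (w₀' t)^2 + M * Vt (w₀ t))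
    · filter_upwards with ε
      exact hw₀sq.aestronglyMeasurable.add (haV ε).aestronglyMeasurable
    · filter_upwards with ε
      filter_upwards with t
      rw [Real.norm_eq_abs]
      have h1 : |a (ε * t) * Vt (w₀ t)| ≤ M * Vt (w₀ t) := by
        rw [abs_mul, abs_of_nonneg (hVnonneg _)]
        exact mul_le_mul_of_nonneg_right (hM _) (hVnonneg _)
      have h2 : |(1/2) * (w₀' t)^2| = (1/2) * (w₀' t)^2 := abs_of_nonneg (by positivity)
      calc |(1/2) * (w₀' t)^2 + a (ε * t) * Vt (w₀ t)|
          ≤ |(1/2) * (w₀' t)^2| + |a (ε * t) * Vt (w₀ t)| := abs_add_le _ _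
      _ ≤ (1/2) * (w₀' t)^2 + M * Vt (w₀ t) := by rw [h2]; linarith
    · exact hw₀sq.add (hw₀V.const_mul M)
    · filter_upwards with t
      have h1 : Tendsto (fun ε : ℝ => ε * t) (nhdsWithin 0 (Set.Ioi 0)) (nhds 0) := by
        have : Tendsto (fun ε : ℝ => ε * t) (nhds 0) (nhds (0 * t)) :=
          (continuous_mul_right t).tendsto 0
        rw [zero_mul] at this
        exact this.mono_left nhdsWithin_le_nhds
      have h2 : Tendsto (fun ε : ℝ => a (ε * t)) (nhdsWithin 0 (Set.Ioi 0)) (nhds (a 0)) :=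
        (ha_cont.tendsto 0).comp h1
      exact tendsto_const_nhds.add (h2.mul tendsto_const_nhds)
  apply tendsto_of_tendsto_of_tendsto_of_le_of_le' tendsto_const_nhds htend
  · filter_upwards [self_mem_nhdsWithin] with ε hε
    exact hBle ε hε
  · filter_upwards [self_mem_nhdsWithin] with ε hε
    exact (hBe ε hε).1 ⟨w₀, w₀', hw₀, rfl⟩
end

section
/- Let a, a_P : ℝ → ℝ be continuous with 0 < inf a and a(t) < a_P(t) for all t, and let Ṽ ≥ 0 be continuous vanishing exactly at ±1. Define J(x) = ∫(½|ẋ|² + a(t)Ṽ(x)) dt and J_P(x) = ∫(½|ẋ|² + a_P(t)Ṽ(x)) dt, with infima B and B_P over W. If B_P is attained by some w_P ∈ W with ∫ Ṽ(w_P) dt > 0, then B < B_P. -/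
open Set MeasureTheory Filter Topology

theorem stmt14 (a aP Vt : ℝ → ℝ) (B BP : ℝ)
    (ha_cont : Continuous a) (haP_cont : Continuous aP)
    (ha_pos : ∃ l₀ > (0 : ℝ), ∀ t, l₀ ≤ a t) (hlt : ∀ t, a t < aP t)
    (hVcont : Continuous Vt) (hVnonneg : ∀ y, 0 ≤ Vt y)
    (hVzero : ∀ y, Vt y = 0 ↔ (y = -1 ∨ y = 1))
    (hB : IsGLB {c | ∃ x x', MemW x x' ∧
      (∫ t, ((1 / 2) * (x' t) ^ 2 + a t * Vt (x t))) = c} B)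
    (hBP : IsGLB {c | ∃ x x', MemW x x' ∧
      (∫ t, ((1 / 2) * (x' t) ^ 2 + aP t * Vt (x t))) = c} BP)
    (wP wP' : ℝ → ℝ) (hwP : MemW wP wP')
    (hwPV : MeasureTheory.Integrable (fun t => Vt (wP t)))
    (hwPaV : MeasureTheory.Integrable (fun t => aP t * Vt (wP t)))
    (hwPVpos : 0 < ∫ t, Vt (wP t))
    (hwPatt : (∫ t, ((1 / 2) * (wP' t) ^ 2 + aP t * Vt (wP t))) = BP) :
    B < BP := by
  obtain ⟨l₀, hl₀, hla⟩ := ha_pos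
  obtain ⟨hloc, hftc, -, -, hInt2⟩ := id hwP
  -- continuity of wP
  have hwPc : Continuous wP := by
    have h : Continuous fun t => wP 0 + ∫ r in (0:ℝ)..t, wP' r :=
      continuous_const.add (intervalIntegral.continuous_primitive (fun a b => by
        simpa [intervalIntegrable_iff] using
          (hloc.integrableOn_isCompact isCompact_uIcc).mono_set Set.uIoc_subset_uIcc) 0)
    convert h using 1
    funext t
    have := hftc 0 t
    linarith
  have haV_int : Integrable (fun t => a t * Vt (wP t)) := by
    refine hwPaV.mono ((ha_cont.mul (hVcont.comp hwPc)).aestronglyMeasurable) ?_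
    filter_upwards with t
    have h1 : 0 ≤ a t := le_trans hl₀.le (hla t)
    rw [Real.norm_eq_abs, Real.norm_eq_abs,
      abs_of_nonneg (mul_nonneg h1 (hVnonneg _)),
      abs_of_nonneg (mul_nonneg (h1.trans (hlt t).le) (hVnonneg _))]
    exact mul_le_mul_of_nonneg_right (hlt t).le (hVnonneg _)
  have hhalf : Integrable (fun t => (1/2 : ℝ) * (wP' t) ^ 2) := hInt2.const_mul _
  set g : ℝ → ℝ := fun t => aP t * Vt (wP t) - a t * Vt (wP t) with hg
  have hg_int : Integrable g := hwPaV.sub haV_int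
  have hg_nonneg : ∀ t, 0 ≤ g t := fun t =>
    sub_nonneg.2 (mul_le_mul_of_nonneg_right (hlt t).le (hVnonneg _))
  have hg_pos : 0 < ∫ t, g t := by
    rcases lt_or_eq_of_le (integral_nonneg (f := g) hg_nonneg) with h | h
    · exact h
    exfalso
    have hae : g =ᵐ[MeasureTheory.volume] 0 :=
      (integral_eq_zero_iff_of_nonneg hg_nonneg hg_int).mp h.symm
    have hVae : (fun t => Vt (wP t)) =ᵐ[MeasureTheory.volume] 0 := by
      filter_upwards [hae] with t ht
      have : (aP t - a t) * Vt (wP t) = 0 := by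
        simp only [hg, Pi.zero_apply] at ht; ring_nf; ring_nf at ht; linarith
      rcases mul_eq_zero.mp this with h' | h'
      · exact absurd h' (by have := hlt t; intro hc; linarith)
      · exact h'
    have : (∫ t, Vt (wP t)) = 0 := by
      simpa using integral_congr_ae hVae
    linarith
  have hsum : (∫ t, ((1 / 2) * (wP' t) ^ 2 + a t * Vt (wP t)))
      = (∫ t, (1/2 : ℝ) * (wP' t) ^ 2) + ∫ t, a t * Vt (wP t) :=
    integral_add hhalf haV_int
  have hsumP : (∫ t, ((1 / 2) * (wP' t) ^ 2 + aP t * Vt (wP t)))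
      = (∫ t, (1/2 : ℝ) * (wP' t) ^ 2) + ∫ t, aP t * Vt (wP t) :=
    integral_add hhalf hwPaV
  have hgsub : (∫ t, g t) = (∫ t, aP t * Vt (wP t)) - ∫ t, a t * Vt (wP t) :=
    integral_sub hwPaV haV_int
  have hBle : B ≤ ∫ t, ((1 / 2) * (wP' t) ^ 2 + a t * Vt (wP t)) :=
    hB.1 ⟨wP, wP', hwP, rfl⟩
  linarith
end

section
/- Let a : ℝ → ℝ be continuous with a(t) ≥ l₀ > 0 and a(t) → +∞ as |t| → +∞ (coercive). Let (Uₙ) ⊂ H¹_loc(ℝ) with J(Uₙ) = ∫(½|U̇ₙ|² + a(t)Ṽ(Uₙ)) dt bounded, and let sₙ < tₙ be such that Uₙ(t) ∈ [−1+ε/2, 1−ε/2] for all t ∈ [sₙ, tₙ], with tₙ − sₙ bounded, |Uₙ(tₙ) − Uₙ(sₙ)| → 2 − ε, and ε ∈ (0,1) fixed. If Ṽ ≥ V₀ > 0 on [−1+ε/2, 1−ε/2], then the sequence (sₙ) is bounded. -/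
open Set MeasureTheory Filter Topology

theorem stmt15 (a Vt : ℝ → ℝ) (l₀ V₀ ε M K : ℝ)
    (ha_cont : Continuous a) (hl₀ : 0 < l₀) (ha : ∀ t, l₀ ≤ a t)
    (ha_top : Filter.Tendsto a Filter.atTop Filter.atTop)
    (ha_bot : Filter.Tendsto a Filter.atBot Filter.atTop)
    (hε : ε ∈ Set.Ioo (0 : ℝ) 1) (hV₀ : 0 < V₀)
    (hVnn : ∀ y, 0 ≤ Vt y)
    (hV : ∀ y ∈ Set.Icc (-1 + ε / 2) (1 - ε / 2), V₀ ≤ Vt y)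
    (U U' : ℕ → ℝ → ℝ) (s t : ℕ → ℝ) (hst : ∀ n, s n < t n)
    (hU'loc : ∀ n, MeasureTheory.LocallyIntegrable (U' n))
    (hAC : ∀ n, ∀ p q : ℝ, U n q - U n p = ∫ r in p..q, U' n r)
    (hint : ∀ n, MeasureTheory.Integrable
      (fun r => (1 / 2) * (U' n r) ^ 2 + a r * Vt (U n r)))
    (hJ : ∀ n, (∫ r, ((1 / 2) * (U' n r) ^ 2 + a r * Vt (U n r))) ≤ M)
    (hUin : ∀ n, ∀ r ∈ Set.Icc (s n) (t n),
      U n r ∈ Set.Icc (-1 + ε / 2) (1 - ε / 2))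
    (hK : ∀ n, t n - s n ≤ K)
    (hgap : Filter.Tendsto (fun n => |U n (t n) - U n (s n)|)
      Filter.atTop (nhds (2 - ε))) :
    ∃ S : ℝ, ∀ n, |s n| ≤ S := by
  obtain ⟨hε0, hε1⟩ := hε
  set M' : ℝ := max M 1 with hM'def
  have hM'pos : (0:ℝ) < M' := lt_of_lt_of_le one_pos (le_max_right _ _)
  have hM'ge : M ≤ M' := le_max_left _ _
  -- nonnegativity of the integrand
  have hf_nn : ∀ n r, 0 ≤ (1/2) * (U' n r)^2 + a r * Vt (U n r) := by
    intro n r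
    have h1 : 0 ≤ a r * Vt (U n r) :=
      mul_nonneg (le_of_lt (lt_of_lt_of_le hl₀ (ha r))) (hVnn _)
    nlinarith [sq_nonneg (U' n r)]
  have hK0 : 0 ≤ K := le_trans (by linarith [hst 0]) (hK 0)
  -- volume of the interval
  have htr : ∀ n, (volume (Ioc (s n) (t n))).toReal = t n - s n := by
    intro n
    rw [Real.volume_Ioc]
    exact ENNReal.toReal_ofReal (by linarith [hst n])
  have hvolne : ∀ n, volume (Ioc (s n) (t n)) ≠ ⊤ := by
    intro n; rw [Real.volume_Ioc]; exact ENNReal.ofReal_ne_top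
  -- integrability of U'^2
  have hsqint : ∀ n, Integrable (fun r => (U' n r)^2) := by
    intro n
    have hm : AEStronglyMeasurable (fun r => (U' n r)^2) volume := by
      have h := (hU'loc n).aestronglyMeasurable
      exact h.pow 2
    have hhalf : Integrable (fun r => (1/2) * (U' n r)^2) := by
      refine (hint n).mono (hm.const_mul _) (ae_of_all _ fun r => ?_)
      rw [Real.norm_eq_abs, Real.norm_eq_abs,
        abs_of_nonneg (by positivity), abs_of_nonneg (hf_nn n r)]
      have h1 : 0 ≤ a r * Vt (U n r) :=
        mul_nonneg (le_of_lt (lt_of_lt_of_le hl₀ (ha r))) (hVnn _)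
      linarith
    have := hhalf.const_mul 2
    simpa [mul_assoc] using this
  -- the set integral of U'^2 is at most 2 * M'
  have hsqbound : ∀ n, ∫ r in Ioc (s n) (t n), (U' n r)^2 ≤ 2 * M' := by
    intro n
    have h1 : ∫ r in Ioc (s n) (t n), (1/2) * (U' n r)^2
        ≤ ∫ r in Ioc (s n) (t n), ((1/2) * (U' n r)^2 + a r * Vt (U n r)) := by
      refine integral_mono ((hsqint n).const_mul _).integrableOn
        (hint n).integrableOn fun r => ?_
      have : 0 ≤ a r * Vt (U n r) :=
        mul_nonneg (le_of_lt (lt_of_lt_of_le hl₀ (ha r))) (hVnn _)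
      simp only; linarith
    have h2 := setIntegral_le_integral (s := Ioc (s n) (t n)) (hint n) (ae_of_all _ (hf_nn n))
    have h3 : ∫ r in Ioc (s n) (t n), (1/2) * (U' n r)^2
        = (1/2) * ∫ r in Ioc (s n) (t n), (U' n r)^2 := by
      rw [integral_const_mul]
    have := hJ n
    linarith
  -- the key gap estimate
  have key2 : ∀ n, |U n (t n) - U n (s n)| ≤ 2 * M' * (t n - s n) + 1/4 := by
    intro n
    have hsle := (hst n).le
    have hU'I : IntegrableOn (U' n) (Ioc (s n) (t n)) :=
      ((hU'loc n).integrableOn_isCompact isCompact_Icc).mono_set Ioc_subset_Icc_self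
    have habs : |U n (t n) - U n (s n)| ≤ ∫ r in Ioc (s n) (t n), |U' n r| := by
      rw [hAC n (s n) (t n), intervalIntegral.integral_of_le hsle]
      simpa [Real.norm_eq_abs] using
        norm_integral_le_integral_norm (μ := volume.restrict (Ioc (s n) (t n))) (U' n)
    have hmono : ∫ r in Ioc (s n) (t n), |U' n r|
        ≤ ∫ r in Ioc (s n) (t n), (2 * M' + (U' n r)^2 / (8 * M')) := by
      refine integral_mono hU'I.abs ?_ fun r => ?_
      · exact (integrableOn_const (hvolne n)).add
          ((hsqint n).div_const _).integrableOn
      · simp only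
        rw [← sub_le_iff_le_add', le_div_iff₀ (by positivity : (0:ℝ) < 8 * M')]
        nlinarith [sq_nonneg (|U' n r| - 4 * M'), sq_abs (U' n r)]
    have heq : ∫ r in Ioc (s n) (t n), (2 * M' + (U' n r)^2 / (8 * M'))
        = 2 * M' * (t n - s n) + (∫ r in Ioc (s n) (t n), (U' n r)^2) / (8 * M') := by
      rw [integral_add (integrableOn_const (C := 2 * M') (hvolne n))
        ((hsqint n).div_const _).integrableOn, setIntegral_const, integral_div, measureReal_def, htr n,
        smul_eq_mul]
      ring
    have hdiv : (∫ r in Ioc (s n) (t n), (U' n r)^2) / (8 * M') ≤ 1/4 := by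
      rw [div_le_iff₀ (by positivity)]
      have := hsqbound n
      linarith
    linarith [habs, hmono, heq ▸ hmono]
  -- eventually the gap exceeds 1
  have hev : ∀ᶠ n in atTop, 1 < |U n (t n) - U n (s n)| :=
    hgap.eventually_const_lt (by linarith)
  obtain ⟨N, hN⟩ := eventually_atTop.mp hev
  -- for n ≥ N, t n - s n ≥ c
  set c : ℝ := 1 / (4 * M') with hcdef
  have hcpos : 0 < c := by positivity
  have hlen : ∀ n, N ≤ n → c ≤ t n - s n := by
    intro n hn
    have h1 := hN n hn
    have h2 := key2 n
    rw [hcdef, div_le_iff₀ (by positivity)]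
    nlinarith
  -- the lower bound via the potential term
  set B : ℝ := (M' + 1) / (V₀ * c) with hBdef
  have hBpos : 0 < B := by positivity
  have key1 : ∀ n, (∀ r ∈ Ioc (s n) (t n), B ≤ a r) → V₀ * B * (t n - s n) ≤ M' := by
    intro n hBa
    have hle : ∀ r ∈ Ioc (s n) (t n),
        V₀ * B ≤ (1/2) * (U' n r)^2 + a r * Vt (U n r) := by
      intro r hr
      have hr' : r ∈ Icc (s n) (t n) := Ioc_subset_Icc_self hr
      have h1 : V₀ ≤ Vt (U n r) := hV _ (hUin n r hr')
      have h2 : B ≤ a r := hBa r hr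
      have h3 : V₀ * B ≤ a r * Vt (U n r) := by
        calc V₀ * B = B * V₀ := mul_comm _ _
          _ ≤ a r * Vt (U n r) := mul_le_mul h2 h1 hV₀.le (hl₀.le.trans (ha r))
      nlinarith [sq_nonneg (U' n r)]
    have hlow := setIntegral_ge_of_const_le_real measurableSet_Ioc (hvolne n) hle
      (hint n).integrableOn
    rw [measureReal_def, htr n] at hlow
    have h2 := setIntegral_le_integral (s := Ioc (s n) (t n)) (hint n) (ae_of_all _ (hf_nn n))
    have := hJ n
    calc V₀ * B * (t n - s n) = V₀ * B * (volume (Ioc (s n) (t n))).toReal / 1 := by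
          rw [htr n]; ring
      _ ≤ M' := by rw [htr n]; linarith [mul_assoc V₀ B (t n - s n) ▸ hlow]
  -- choose thresholds from coercivity
  obtain ⟨R₁, hR₁⟩ := eventually_atTop.mp (ha_top.eventually_ge_atTop B)
  obtain ⟨R₂, hR₂⟩ := eventually_atBot.mp (ha_bot.eventually_ge_atTop B)
  -- for n ≥ N, |s n| is bounded
  have hbound : ∀ n, N ≤ n → |s n| ≤ |R₁| + |R₂| + K := by
    intro n hn
    have hlenc := hlen n hn
    have hcontra : ∀ (h : ∀ r ∈ Ioc (s n) (t n), B ≤ a r), False := by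
      intro h
      have h1 := key1 n h
      have h2 : V₀ * B * c ≤ V₀ * B * (t n - s n) :=
        mul_le_mul_of_nonneg_left hlenc (by positivity)
      have h3 : V₀ * B * c = M' + 1 := by
        rw [hBdef]; field_simp
      linarith
    have hs1 : s n ≤ R₁ := by
      by_contra hc
      push_neg at hc
      exact hcontra fun r hr => hR₁ r (hc.le.trans hr.1.le)
    have hs2 : R₂ - K ≤ s n := by
      by_contra hc
      push_neg at hc
      refine hcontra fun r hr => hR₂ r ?_
      have := hK n
      linarith [hr.2]
    rw [abs_le]
    constructor
    · have : -|R₂| ≤ R₂ := neg_abs_le _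
      linarith [abs_nonneg R₁]
    · have : R₁ ≤ |R₁| := le_abs_self _
      have h2 : -|R₂| ≤ R₂ := neg_abs_le _
      linarith [abs_nonneg R₂]
  -- combine with finitely many initial terms
  refine ⟨max (|R₁| + |R₂| + K) (∑ i ∈ Finset.range N, |s i|), fun n => ?_⟩
  rcases lt_or_ge n N with h | h
  · refine le_trans ?_ (le_max_right _ _)
    exact Finset.single_le_sum (f := fun i => |s i|) (fun i _ => abs_nonneg _)
      (Finset.mem_range.mpr h)
  · exact le_trans (hbound n h) (le_max_left _ _)
end
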